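/- arXiv:2210.08686 — 4 statements merged into one kernel-verified Lean document; each statement's English description precedes it below -/
import Mathlib

section
/- Let (φ_j)_{j≥1} be a sequence of functions ℝ → ℝ such that each φ_j lies in H¹₀(0,1) with derivative g_j, the family is orthonormal in L²(0,1) (∫₀¹ φ_i φ_j dx = δ_{ij} for all i, j ≥ 1), and the sequence of kinetic energies is non-decreasing, i.e. ∫₀¹ g_j² dx ≤ ∫₀¹ g_{j+1}² dx for all j ≥ 1. Then for every j ≥ 1 one has ∫₀¹ g_j(x)² dx ≥ π² j² / 3 (equivalently, the L²(0,1)-norm of g_j is at least π j / √3). -/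
set_option maxHeartbeats 1000000

open MeasureTheory

/-- `φ` lies in `H¹₀(0,1)` with derivative `g`. -/
def InH10 (φ g : ℝ → ℝ) : Prop :=
  Measurable g ∧ IntegrableOn (fun t => g t ^ 2) (Set.Ioo 0 1) ∧
    (∀ x ∈ Set.Icc (0:ℝ) 1, φ x = ∫ t in (0:ℝ)..x, g t) ∧ φ 1 = 0

section Helpers
open MeasureTheory Real Set intervalIntegral Complex
open scoped ENNReal


lemma int_cos' (c a b : ℝ) (hc : c ≠ 0) :
    ∫ x in a..b, Real.cos (c * x) = (Real.sin (c * b) - Real.sin (c * a)) / c := by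
  have := intervalIntegral.integral_comp_mul_left (fun y => Real.cos y) (a := a) (b := b) hc
  simp [integral_cos] at this
  rw [this]; ring

lemma int_sin' (c a b : ℝ) (hc : c ≠ 0) :
    ∫ x in a..b, Real.sin (c * x) = (Real.cos (c * a) - Real.cos (c * b)) / c := by
  have := intervalIntegral.integral_comp_mul_left (fun y => Real.sin y) (a := a) (b := b) hc
  simp [integral_sin] at this
  rw [this]; ring

lemma int_cos_zero (c : ℝ) (hc : c ≠ 0) (hs : Real.sin (c * π) = 0) :
    ∫ x in (0:ℝ)..1, Real.cos (c * π * x) = 0 := by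
  have hcpi : c * π ≠ 0 := mul_ne_zero hc Real.pi_ne_zero
  rw [int_cos' _ _ _ hcpi]
  simp [hs]

lemma sin_cast_zero (m : ℤ) : Real.sin ((m:ℝ) * π) = 0 := Real.sin_int_mul_pi m

lemma prod_to_sum (A B : ℝ) :
    Real.cos A * Real.cos B = (Real.cos (A - B) + Real.cos (A + B)) / 2 := by
  have h1 := Real.cos_add A B
  have h2 := Real.cos_sub A B
  linarith

lemma cos_orth (m n : ℕ) (hm : 1 ≤ m) (hn : 1 ≤ n) :
    ∫ x in (0:ℝ)..1, Real.cos (m * π * x) * Real.cos (n * π * x)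
      = if m = n then 1/2 else 0 := by
  have key : ∀ x : ℝ, Real.cos (m * π * x) * Real.cos (n * π * x)
      = (Real.cos (((m:ℝ) - n) * π * x) + Real.cos (((m:ℝ) + n) * π * x)) / 2 := by
    intro x
    rw [prod_to_sum]
    ring_nf
  rw [intervalIntegral.integral_congr (fun x _ => key x)]
  have hsumm : ((m:ℝ) + n) ≠ 0 := by positivity
  have hssum : Real.sin (((m:ℝ) + n) * π) = 0 := by
    have := sin_cast_zero ((m:ℤ) + n); push_cast at this ⊢; exact this
  rw [intervalIntegral.integral_div, intervalIntegral.integral_add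
      ((by continuity : Continuous fun x:ℝ => Real.cos (((m:ℝ) - n) * π * x)).intervalIntegrable _ _)
      ((by continuity : Continuous fun x:ℝ => Real.cos (((m:ℝ) + n) * π * x)).intervalIntegrable _ _)]
  rcases eq_or_ne m n with h | h
  · subst h
    simp only [if_pos rfl, sub_self, zero_mul, Real.cos_zero]
    rw [int_cos_zero _ hsumm hssum]
    norm_num
  · have hd : ((m:ℝ) - n) ≠ 0 := by
      intro hc; apply h
      have : (m:ℝ) = n := by linarith
      exact_mod_cast this
    have hsd : Real.sin (((m:ℝ) - n) * π) = 0 := by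
      have := sin_cast_zero ((m:ℤ) - n); push_cast at this ⊢; exact this
    simp only [if_neg h]
    rw [int_cos_zero _ hd hsd, int_cos_zero _ hsumm hssum]
    norm_num

lemma sin_sq_int (k : ℕ) (hk : 1 ≤ k) :
    ∫ x in (0:ℝ)..1, Real.sin (k * π * x) ^ 2 = 1/2 := by
  have key : ∀ x : ℝ, Real.sin ((k:ℝ) * π * x) ^ 2
      = (1 - Real.cos (((2:ℝ)*(k:ℝ)) * π * x)) / 2 := by
    intro x
    have h2 : ((2:ℝ)*(k:ℝ)) * π * x = 2 * ((k:ℝ) * π * x) := by ring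
    rw [h2, Real.cos_two_mul, Real.cos_sq']
    ring
  rw [intervalIntegral.integral_congr (fun x _ => key x)]
  have h2k : ((2:ℝ)*(k:ℝ)) ≠ 0 := by positivity
  have hs : Real.sin (((2:ℝ)*(k:ℝ)) * π) = 0 := by
    have := sin_cast_zero (2*(k:ℤ)); push_cast at this ⊢; exact this
  rw [intervalIntegral.integral_div, intervalIntegral.integral_sub
      ((by continuity : Continuous fun _:ℝ => (1:ℝ)).intervalIntegrable _ _)
      ((by continuity : Continuous fun x:ℝ => Real.cos (((2:ℝ)*(k:ℝ)) * π * x)).intervalIntegrable _ _)]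
  rw [int_cos_zero _ h2k hs]
  simp


lemma g_integrable {φ g : ℝ → ℝ} (h : InH10 φ g) : IntegrableOn g (Set.Ioo 0 1) := by
  obtain ⟨hm, hsq, -, -⟩ := h
  have : IntegrableOn (fun t => 1 + g t ^ 2) (Set.Ioo 0 1) :=
    (integrableOn_const (by simp [Real.volume_Ioo])).add hsq
  refine Integrable.mono' this (hm.aestronglyMeasurable.restrict) ?_
  filter_upwards with t
  have : (|g t| - 1) ^ 2 ≥ 0 := sq_nonneg _
  rw [Real.norm_eq_abs]
  nlinarith [_root_.sq_abs (g t)]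

/-- the globally integrable modification of `g` -/
noncomputable def gc (g : ℝ → ℝ) : ℝ → ℝ := (Set.Ioo (0:ℝ) 1).indicator g

lemma gc_integrable {φ g : ℝ → ℝ} (h : InH10 φ g) : Integrable (gc g) :=
  (integrable_indicator_iff measurableSet_Ioo).mpr (g_integrable h)

/-- the continuous primitive -/
noncomputable def psi (g : ℝ → ℝ) : ℝ → ℝ := fun x => ∫ t in (0:ℝ)..x, gc g t

lemma psi_continuous {φ g : ℝ → ℝ} (h : InH10 φ g) : Continuous (psi g) :=
  intervalIntegral.continuous_primitive (fun _ _ => (gc_integrable h).intervalIntegrable) 0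

lemma psi_eq_phi {φ g : ℝ → ℝ} (h : InH10 φ g) : ∀ x ∈ Set.Icc (0:ℝ) 1, psi g x = φ x := by
  intro x hx
  rw [h.2.2.1 x hx, psi]
  apply intervalIntegral.integral_congr_ae
  have h1 : ∀ᵐ t : ℝ, t ≠ 1 := by
    refine (ae_iff).mpr ?_
    simp only [not_ne_iff]
    have : {a : ℝ | a = 1} = {(1:ℝ)} := by ext a; simp
    rw [this]; exact Real.volume_singleton
  filter_upwards [h1] with t ht hmem
  rw [Set.uIoc_of_le hx.1] at hmem
  have : t ∈ Set.Ioo (0:ℝ) 1 := ⟨hmem.1, lt_of_le_of_ne (hmem.2.trans hx.2) ht⟩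
  simp [gc, Set.indicator_of_mem this]

lemma psi_nonpos {g : ℝ → ℝ} {x : ℝ} (hx : x ≤ 0) : psi g x = 0 := by
  rw [psi, intervalIntegral.integral_of_ge hx, neg_eq_zero]
  apply MeasureTheory.setIntegral_eq_zero_of_forall_eq_zero
  intro t ht
  have : t ∉ Set.Ioo (0:ℝ) 1 := by
    intro hc
    have := hc.1
    have := ht.2
    linarith
  simp [gc, Set.indicator_of_notMem this]

lemma int_g_zero {φ g : ℝ → ℝ} (h : InH10 φ g) : ∫ x in Set.Ioo (0:ℝ) 1, g x = 0 := by
  have h1 := h.2.2.1 1 (by norm_num)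
  rw [h.2.2.2] at h1
  rw [← MeasureTheory.integral_Ioc_eq_integral_Ioo]
  rw [← intervalIntegral.integral_of_le (by norm_num : (0:ℝ) ≤ 1)]
  exact h1.symm


lemma stepA {φ g : ℝ → ℝ} (h : InH10 φ g) (k : ℕ) (hk : 1 ≤ k) :
    ∫ x in Set.Ioo (0:ℝ) 1, φ x * Real.sin (k * π * x)
      = (1 / (k * π)) * ∫ x in Set.Ioo (0:ℝ) 1, g x * Real.cos (k * π * x) := by
  have hkπ : (k:ℝ) * π ≠ 0 := by
    have := Real.pi_pos; positivity
  set μ := volume.restrict (Set.Ioo (0:ℝ) 1) with hμ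
  have hfin : IsFiniteMeasure μ := by
    constructor; rw [hμ, Measure.restrict_apply_univ]; simp [Real.volume_Ioo]
  set F : ℝ → ℝ → ℝ := fun x t => Real.sin (k*π*x) * (Set.Iic x).indicator g t with hF
  -- measurability of uncurried F
  have hFm : AEStronglyMeasurable (Function.uncurry F) (μ.prod μ) := by
    have h1 : Function.uncurry F = fun p : ℝ × ℝ =>
        Real.sin (k*π*p.1) * ({q : ℝ × ℝ | q.2 ≤ q.1}.indicator (fun q => g q.2) p) := by
      funext p
      simp only [Function.uncurry, hF, Set.indicator, Set.mem_Iic, Set.mem_setOf_eq]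
    rw [h1]
    apply Measurable.aestronglyMeasurable
    exact ((Real.continuous_sin.comp (continuous_const.mul continuous_fst)).measurable).mul
      (Measurable.indicator (h.1.comp measurable_snd)
        (measurableSet_le measurable_snd measurable_fst))
  -- integrability of uncurried F
  have hgabs : Integrable (fun t => |g t|) μ := (g_integrable h).abs
  have hbound : Integrable (fun p : ℝ × ℝ => (1:ℝ) * |g p.2|) (μ.prod μ) :=
    Integrable.mul_prod (integrable_const 1) hgabs
  have hFint : Integrable (Function.uncurry F) (μ.prod μ) := by
    refine hbound.mono' hFm ?_
    filter_upwards with p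
    simp only [Function.uncurry, hF, Real.norm_eq_abs, abs_mul, one_mul]
    rcases Set.indicator_eq_zero_or_self (Set.Iic p.1) g p.2 with h0 | h0 <;> rw [h0]
    · simp [abs_nonneg]
    · exact mul_le_of_le_one_left (abs_nonneg _) (abs_le.mpr ⟨Real.neg_one_le_sin _, Real.sin_le_one _⟩)
  -- inner integral in t equals φ
  have hinner1 : ∀ x ∈ Set.Ioo (0:ℝ) 1, (∫ t, F x t ∂μ) = Real.sin (k*π*x) * φ x := by
    intro x hx
    rw [hF]
    simp only
    rw [MeasureTheory.integral_const_mul]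
    congr 1
    rw [hμ, setIntegral_indicator measurableSet_Iic]
    have hseteq : Set.Ioo (0:ℝ) 1 ∩ Set.Iic x = Set.Ioc 0 x := by
      ext t; simp only [Set.mem_inter_iff, Set.mem_Ioo, Set.mem_Iic, Set.mem_Ioc]
      constructor
      · rintro ⟨⟨h1, h2⟩, h3⟩; exact ⟨h1, h3⟩
      · rintro ⟨h1, h2⟩; exact ⟨⟨h1, lt_of_le_of_lt h2 hx.2⟩, h2⟩
    rw [hseteq, ← intervalIntegral.integral_of_le hx.1.le]
    exact (h.2.2.1 x ⟨hx.1.le, hx.2.le⟩).symm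
  -- inner integral in x
  have hinner2 : ∀ t ∈ Set.Ioo (0:ℝ) 1, (∫ x, F x t ∂μ)
      = g t * ((Real.cos (k*π*t) - Real.cos (k*π)) / (k*π)) := by
    intro t ht
    have hre : ∀ x : ℝ, F x t = g t * (Set.Ici t).indicator (fun y => Real.sin (k*π*y)) x := by
      intro x
      simp only [hF, Set.indicator, Set.mem_Iic, Set.mem_Ici]
      by_cases hxt : t ≤ x <;> simp [hxt, mul_comm]
    simp only [hre]
    rw [MeasureTheory.integral_const_mul]
    congr 1
    rw [hμ, setIntegral_indicator measurableSet_Ici]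
    have hseteq : Set.Ioo (0:ℝ) 1 ∩ Set.Ici t = Set.Ico t 1 := by
      ext y; simp only [Set.mem_inter_iff, Set.mem_Ioo, Set.mem_Ici, Set.mem_Ico]
      constructor
      · rintro ⟨⟨h1, h2⟩, h3⟩; exact ⟨h3, h2⟩
      · rintro ⟨h1, h2⟩; exact ⟨⟨lt_of_lt_of_le ht.1 h1, h2⟩, h1⟩
    rw [hseteq, MeasureTheory.integral_Ico_eq_integral_Ioo,
      ← MeasureTheory.integral_Ioc_eq_integral_Ioo,
      ← intervalIntegral.integral_of_le ht.2.le]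
    have := int_sin' ((k:ℝ)*π) t 1 hkπ
    rw [this, mul_one]
  -- put together
  have hμswap := MeasureTheory.integral_integral_swap (f := F) hFint
  calc ∫ x in Set.Ioo (0:ℝ) 1, φ x * Real.sin (k * π * x)
      = ∫ x, Real.sin (k*π*x) * φ x ∂μ := by
        rw [hμ]; exact setIntegral_congr_fun measurableSet_Ioo (fun x _ => mul_comm _ _)
    _ = ∫ x, ∫ t, F x t ∂μ ∂μ := by
        rw [hμ]
        refine (setIntegral_congr_fun measurableSet_Ioo ?_).symm
        intro x hx; exact hinner1 x hx
    _ = ∫ t, ∫ x, F x t ∂μ ∂μ := hμswap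
    _ = ∫ t, g t * ((Real.cos (k*π*t) - Real.cos (k*π)) / (k*π)) ∂μ := by
        rw [hμ]
        exact setIntegral_congr_fun measurableSet_Ioo (fun t ht => hinner2 t ht)
    _ = (1 / (k * π)) * ∫ x in Set.Ioo (0:ℝ) 1, g x * Real.cos (k * π * x) := by
        have hint1 : Integrable (fun t => g t * Real.cos (k*π*t)) μ := by
          have : Integrable (fun t => Real.cos (k*π*t) * g t) μ := by
            refine Integrable.bdd_mul (c := 1) (g_integrable h)
              ((Real.continuous_cos.comp (continuous_const.mul continuous_id)).aestronglyMeasurable) ?_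
            filter_upwards with t
            simpa using abs_le.mpr ⟨Real.neg_one_le_cos _, Real.cos_le_one _⟩
          simpa [mul_comm] using this
        have hint2 : Integrable g μ := g_integrable h
        have hre : ∀ t : ℝ, g t * ((Real.cos (k*π*t) - Real.cos (k*π)) / (k*π))
            = (1/(k*π)) * (g t * Real.cos (k*π*t)) - (Real.cos (k*π) / (k*π)) * g t := by
          intro t; field_simp
        simp only [hre]
        rw [MeasureTheory.integral_sub (hint1.const_mul _) (hint2.const_mul _),
          MeasureTheory.integral_const_mul, MeasureTheory.integral_const_mul]
        rw [hμ, int_g_zero h]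
        ring


noncomputable abbrev μ01 : Measure ℝ := volume.restrict (Set.Ioo (0:ℝ) 1)

instance : IsFiniteMeasure μ01 := by
  constructor; rw [Measure.restrict_apply_univ]; simp [Real.volume_Ioo]

lemma ioo_eq_interval (f : ℝ → ℝ) :
    ∫ x in Set.Ioo (0:ℝ) 1, f x = ∫ x in (0:ℝ)..1, f x := by
  rw [intervalIntegral.integral_of_le (by norm_num : (0:ℝ) ≤ 1),
    MeasureTheory.integral_Ioc_eq_integral_Ioo]

-- inner product formula for toLp elements
lemma inner_toLp {f₁ f₂ : ℝ → ℝ} (h₁ : MemLp f₁ 2 μ01) (h₂ : MemLp f₂ 2 μ01) :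
    (inner ℝ (h₁.toLp f₁) (h₂.toLp f₂) : ℝ) = ∫ x, f₁ x * f₂ x ∂μ01 := by
  rw [MeasureTheory.L2.inner_def]
  apply MeasureTheory.integral_congr_ae
  filter_upwards [h₁.coeFn_toLp, h₂.coeFn_toLp] with x hx1 hx2
  rw [hx1, hx2]
  simp [RCLike.inner_apply, starRingEnd_apply, star_trivial, mul_comm]

lemma memℒp_bddcont {f : ℝ → ℝ} (hf : Continuous f) (C : ℝ)
    (hC : ∀ x ∈ Set.Icc (0:ℝ) 1, ‖f x‖ ≤ C) : MemLp f 2 μ01 := by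
  refine MemLp.of_bound hf.aestronglyMeasurable.restrict C ?_
  refine (ae_restrict_iff' measurableSet_Ioo).mpr (Filter.Eventually.of_forall ?_)
  intro x hx
  exact hC x ⟨hx.1.le, hx.2.le⟩

lemma memℒp_trig (h : Continuous fun x : ℝ => Real.sin x) : True := trivial

lemma memℒp_phi {φ g : ℝ → ℝ} (h : InH10 φ g) : MemLp φ 2 μ01 := by
  have hcont := psi_continuous h
  obtain ⟨C, hC⟩ := isCompact_Icc.exists_bound_of_continuousOn
    (hcont.continuousOn : ContinuousOn (psi g) (Set.Icc (0:ℝ) 1))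
  have hmem : MemLp (psi g) 2 μ01 := memℒp_bddcont hcont C hC
  refine hmem.ae_eq ?_
  refine (ae_restrict_iff' measurableSet_Ioo).mpr (Filter.Eventually.of_forall ?_)
  intro x hx
  exact psi_eq_phi h x ⟨hx.1.le, hx.2.le⟩

lemma memℒp_phi_ae {φ g : ℝ → ℝ} (h : InH10 φ g) :
    ((memℒp_phi h).toLp φ : Lp ℝ 2 μ01) =ᵐ[μ01] φ := (memℒp_phi h).coeFn_toLp

-- Step B
lemma stepB {φ g : ℝ → ℝ} (h : InH10 φ g) (K : ℕ) :
    ∑ k ∈ Finset.range K,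
      2 * (∫ x in Set.Ioo (0:ℝ) 1, g x * Real.cos ((k+1 : ℕ) * π * x)) ^ 2
      ≤ ∫ x in Set.Ioo (0:ℝ) 1, g x ^ 2 := by
  have hg2 : MemLp g 2 μ01 := by
    rw [memLp_two_iff_integrable_sq (h.1.aestronglyMeasurable.restrict)]
    exact h.2.1
  set xg : Lp ℝ 2 μ01 := hg2.toLp g with hxg
  have hsqrt2 : (Real.sqrt 2) ^ 2 = 2 := Real.sq_sqrt (by norm_num)
  have hmemv : ∀ k : ℕ, MemLp (fun x => Real.sqrt 2 * Real.cos ((k+1 : ℕ) * π * x)) 2 μ01 := by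
    intro k
    refine memℒp_bddcont (by continuity) (Real.sqrt 2) ?_
    intro x _
    rw [Real.norm_eq_abs, abs_mul, _root_.abs_of_nonneg (Real.sqrt_nonneg 2)]
    exact mul_le_of_le_one_right (Real.sqrt_nonneg 2)
      (abs_le.mpr ⟨Real.neg_one_le_cos _, Real.cos_le_one _⟩)
  set v : ℕ → Lp ℝ 2 μ01 := fun k => (hmemv k).toLp _ with hv
  have hortho : Orthonormal ℝ v := by
    rw [orthonormal_iff_ite]
    intro i j
    rw [hv]
    simp only
    rw [inner_toLp (hmemv i) (hmemv j)]
    have : ∀ x : ℝ, (Real.sqrt 2 * Real.cos ((i+1:ℕ) * π * x)) * (Real.sqrt 2 * Real.cos ((j+1:ℕ) * π * x))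
        = 2 * (Real.cos ((i+1:ℕ) * π * x) * Real.cos ((j+1:ℕ) * π * x)) := by
      intro x
      have h22 : Real.sqrt 2 * Real.sqrt 2 = 2 := Real.mul_self_sqrt (by norm_num)
      linear_combination (Real.cos ((i+1:ℕ) * π * x) * Real.cos ((j+1:ℕ) * π * x)) * h22
    simp only [this]
    rw [MeasureTheory.integral_const_mul, ioo_eq_interval,
      cos_orth (i+1) (j+1) (by omega) (by omega)]
    by_cases hij : i = j
    · simp [hij]
    · have : ¬ (i + 1 = j + 1) := by omega
      simp [hij, this]
  have hbessel := hortho.sum_inner_products_le (s := Finset.range K) xg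
  have hnorm : ‖xg‖ ^ 2 = ∫ x in Set.Ioo (0:ℝ) 1, g x ^ 2 := by
    rw [← real_inner_self_eq_norm_sq, hxg, inner_toLp hg2 hg2]
    congr 1; funext x; ring
  rw [hnorm] at hbessel
  refine le_trans (le_of_eq ?_) hbessel
  apply Finset.sum_congr rfl
  intro k _
  rw [hv]
  simp only
  rw [inner_toLp (hmemv k) hg2, Real.norm_eq_abs, _root_.sq_abs]
  have : ∀ x : ℝ, (Real.sqrt 2 * Real.cos ((k+1:ℕ) * π * x)) * g x
      = Real.sqrt 2 * (g x * Real.cos ((k+1:ℕ) * π * x)) := by intro x; ring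
  simp only [this]
  rw [MeasureTheory.integral_const_mul]
  rw [mul_pow, hsqrt2]

-- Step D
lemma stepD (φ g : ℕ → ℝ → ℝ)
    (hH : ∀ j, 1 ≤ j → InH10 (φ j) (g j))
    (horth : ∀ i, 1 ≤ i → ∀ j, 1 ≤ j →
      (∫ x in Set.Ioo (0:ℝ) 1, φ i x * φ j x) = if i = j then 1 else 0)
    (J k : ℕ) (hk : 1 ≤ k) :
    ∑ j ∈ Finset.range J,
      2 * (∫ x in Set.Ioo (0:ℝ) 1, φ (j+1) x * Real.sin (k * π * x)) ^ 2 ≤ 1 := by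
  have hmemw : ∀ j : ℕ, MemLp (φ (j+1)) 2 μ01 := fun j => memℒp_phi (hH (j+1) (by omega))
  set w : ℕ → Lp ℝ 2 μ01 := fun j => (hmemw j).toLp _ with hw
  have hortho : Orthonormal ℝ w := by
    rw [orthonormal_iff_ite]
    intro i j
    rw [hw]; simp only
    rw [inner_toLp (hmemw i) (hmemw j), horth (i+1) (by omega) (j+1) (by omega)]
    by_cases hij : i = j
    · simp [hij]
    · have : ¬ (i + 1 = j + 1) := by omega
      simp [hij, this]
  have hmemx : MemLp (fun x => Real.sqrt 2 * Real.sin ((k:ℝ) * π * x)) 2 μ01 := by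
    refine memℒp_bddcont (by continuity) (Real.sqrt 2) ?_
    intro x _
    rw [Real.norm_eq_abs, abs_mul, _root_.abs_of_nonneg (Real.sqrt_nonneg 2)]
    exact mul_le_of_le_one_right (Real.sqrt_nonneg 2)
      (abs_le.mpr ⟨Real.neg_one_le_sin _, Real.sin_le_one _⟩)
  set x0 : Lp ℝ 2 μ01 := hmemx.toLp _ with hx0
  have hbessel := hortho.sum_inner_products_le (s := Finset.range J) x0
  have hnorm : ‖x0‖ ^ 2 = 1 := by
    rw [← real_inner_self_eq_norm_sq, hx0, inner_toLp hmemx hmemx]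
    have : ∀ x : ℝ, (Real.sqrt 2 * Real.sin ((k:ℝ) * π * x)) * (Real.sqrt 2 * Real.sin ((k:ℝ) * π * x))
        = 2 * Real.sin ((k:ℝ) * π * x) ^ 2 := by
      intro x
      have h22 : Real.sqrt 2 * Real.sqrt 2 = 2 := Real.mul_self_sqrt (by norm_num)
      linear_combination (Real.sin ((k:ℝ) * π * x) * Real.sin ((k:ℝ) * π * x)) * h22
    simp only [this]
    rw [MeasureTheory.integral_const_mul, ioo_eq_interval, sin_sq_int k hk]
    norm_num
  rw [hnorm] at hbessel
  refine le_trans (le_of_eq ?_) hbessel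
  apply Finset.sum_congr rfl
  intro j _
  rw [hw]; simp only
  rw [inner_toLp (hmemw j) hmemx, Real.norm_eq_abs, _root_.sq_abs]
  have : ∀ x : ℝ, φ (j+1) x * (Real.sqrt 2 * Real.sin ((k:ℝ) * π * x))
      = Real.sqrt 2 * (φ (j+1) x * Real.sin ((k:ℝ) * π * x)) := by intro x; ring
  simp only [this]
  rw [MeasureTheory.integral_const_mul, mul_pow, Real.sq_sqrt (by norm_num : (2:ℝ) ≥ 0)]

noncomputable def Fodd (g : ℝ → ℝ) : ℝ → ℂ := fun x => ((psi g x - psi g (-x) : ℝ) : ℂ)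

lemma Fodd_neg (g : ℝ → ℝ) (x : ℝ) : Fodd g (-x) = - Fodd g x := by
  simp only [Fodd, neg_neg]
  push_cast
  ring

lemma Fodd_eq_phi {φ g : ℝ → ℝ} (h : InH10 φ g) {x : ℝ} (hx : x ∈ Set.Icc (0:ℝ) 1) :
    Fodd g x = ((φ x : ℝ) : ℂ) := by
  simp only [Fodd, psi_eq_phi h x hx, psi_nonpos (neg_nonpos.mpr hx.1)]
  push_cast; ring

lemma Fodd_cont {φ g : ℝ → ℝ} (h : InH10 φ g) : Continuous (Fodd g) :=
  Complex.continuous_ofReal.comp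
    ((psi_continuous h).sub ((psi_continuous h).comp continuous_neg))

lemma exp_diff (θ : ℝ) :
    Complex.exp (-(θ:ℂ) * Complex.I) - Complex.exp ((θ:ℂ) * Complex.I)
      = -2 * Complex.I * ((Real.sin θ : ℝ) : ℂ) := by
  rw [show (-(θ:ℂ) * Complex.I) = ((-θ : ℂ) * Complex.I) by ring]
  rw [Complex.exp_mul_I, Complex.exp_mul_I, Complex.cos_neg, Complex.sin_neg,
    Complex.ofReal_sin]
  ring


lemma coeff_comp {φ g : ℝ → ℝ} (h : InH10 φ g) (n : ℤ) :
    (∫ x in (-1:ℝ)..1, Complex.exp (-(((n:ℝ) * π * x : ℝ) : ℂ) * Complex.I) * Fodd g x)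
      = -2 * Complex.I *
        (((∫ x in Set.Ioo (0:ℝ) 1, φ x * Real.sin ((n:ℝ) * π * x)) : ℝ) : ℂ) := by
  set E : ℝ → ℂ := fun x => Complex.exp (-(((n:ℝ) * π * x : ℝ) : ℂ) * Complex.I) with hE
  have hEcont : Continuous E := by
    rw [hE]
    exact Complex.continuous_exp.comp (by continuity)
  have hsplit : (∫ x in (-1:ℝ)..1, E x * Fodd g x)
      = (∫ x in (-1:ℝ)..0, E x * Fodd g x) + ∫ x in (0:ℝ)..1, E x * Fodd g x :=
    (intervalIntegral.integral_add_adjacent_intervals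
      ((hEcont.mul (Fodd_cont h)).intervalIntegrable _ _)
      ((hEcont.mul (Fodd_cont h)).intervalIntegrable _ _)).symm
  have hneg : (∫ x in (-1:ℝ)..0, E x * Fodd g x) = - ∫ x in (0:ℝ)..1, E (-x) * Fodd g x := by
    have hcomp := intervalIntegral.integral_comp_neg (a := (0:ℝ)) (b := 1)
      (fun y => E y * Fodd g y)
    simp only [neg_zero] at hcomp
    have hterm : ∀ x : ℝ, E (-x) * Fodd g (-x) = -(E (-x) * Fodd g x) := by
      intro x
      rw [Fodd_neg g x]
      ring
    simp only [hterm] at hcomp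
    rw [intervalIntegral.integral_neg] at hcomp
    exact hcomp.symm
  have hEdiff : ∀ x : ℝ, E x - E (-x)
      = -2 * Complex.I * ((Real.sin ((n:ℝ) * π * x) : ℝ) : ℂ) := by
    intro x
    have h2 : Complex.exp (-(((n:ℝ) * π * (-x) : ℝ) : ℂ) * Complex.I)
        = Complex.exp ((((n:ℝ) * π * x : ℝ) : ℂ) * Complex.I) := by
      congr 1
      push_cast
      ring
    rw [hE]
    simp only
    rw [h2]
    exact exp_diff _
  have hcollect : (∫ x in (-1:ℝ)..1, E x * Fodd g x)
      = ∫ x in (0:ℝ)..1, (-2 * Complex.I) * (((Real.sin ((n:ℝ) * π * x) : ℝ) : ℂ) * Fodd g x) := by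
    have hi1 : IntervalIntegrable (fun x : ℝ => E x * Fodd g x) volume 0 1 :=
      (hEcont.mul (Fodd_cont h)).intervalIntegrable _ _
    have hi2 : IntervalIntegrable (fun x : ℝ => E (-x) * Fodd g x) volume 0 1 :=
      ((hEcont.comp continuous_neg).mul (Fodd_cont h)).intervalIntegrable _ _
    rw [hsplit, hneg, add_comm, ← sub_eq_add_neg]
    rw [← intervalIntegral.integral_sub hi1 hi2]
    apply intervalIntegral.integral_congr
    intro x _
    simp only [Function.comp]
    rw [show E x * Fodd g x - E (-x) * Fodd g x = (E x - E (-x)) * Fodd g x by ring, hEdiff x]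
    ring
  rw [hcollect, intervalIntegral.integral_const_mul]
  congr 1
  have hFval : ∀ x : ℝ, x ∈ Set.uIcc (0:ℝ) 1 →
      ((Real.sin ((n:ℝ) * π * x) : ℝ) : ℂ) * Fodd g x
        = (((Real.sin ((n:ℝ) * π * x) * (psi g x - psi g (-x)) : ℝ)) : ℂ) := by
    intro x _
    rw [Fodd]
    push_cast
    ring
  rw [intervalIntegral.integral_congr hFval, intervalIntegral.integral_ofReal]
  congr 1
  rw [intervalIntegral.integral_of_le (by norm_num : (0:ℝ) ≤ 1),
    MeasureTheory.integral_Ioc_eq_integral_Ioo]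
  apply setIntegral_congr_fun measurableSet_Ioo
  intro x hx
  simp only
  rw [psi_eq_phi h x ⟨hx.1.le, hx.2.le⟩, psi_nonpos (neg_nonpos.mpr hx.1.le)]
  ring

lemma norm_comp {φ g : ℝ → ℝ} (h : InH10 φ g)
    (hnorm : ∫ x in Set.Ioo (0:ℝ) 1, φ x ^ 2 = 1) :
    (∫ x in (-1:ℝ)..1, ‖Fodd g x‖^2) = 2 := by
  have hNcont : Continuous (fun x : ℝ => ‖Fodd g x‖^2) :=
    Continuous.pow (Fodd_cont h).norm 2
  have hsplit : (∫ x in (-1:ℝ)..1, ‖Fodd g x‖^2)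
      = (∫ x in (-1:ℝ)..0, ‖Fodd g x‖^2) + ∫ x in (0:ℝ)..1, ‖Fodd g x‖^2 :=
    (intervalIntegral.integral_add_adjacent_intervals
      (hNcont.intervalIntegrable _ _) (hNcont.intervalIntegrable _ _)).symm
  have hcomp := intervalIntegral.integral_comp_neg (a := (0:ℝ)) (b := 1)
    (fun y => ‖Fodd g y‖^2)
  simp only [neg_zero] at hcomp
  have hterm : ∀ x : ℝ, ‖Fodd g (-x)‖^2 = ‖Fodd g x‖^2 := by
    intro x
    rw [Fodd_neg g x, norm_neg]
  simp only [hterm] at hcomp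
  have e6 : (∫ x in (0:ℝ)..1, ‖Fodd g x‖^2) = 1 := by
    have hh : ∀ x : ℝ, x ∈ Set.uIcc (0:ℝ) 1 → ‖Fodd g x‖^2 = (psi g x - psi g (-x))^2 := by
      intro x _
      rw [Fodd, Complex.norm_real, Real.norm_eq_abs, _root_.sq_abs]
    rw [intervalIntegral.integral_congr hh,
      intervalIntegral.integral_of_le (by norm_num : (0:ℝ) ≤ 1),
      MeasureTheory.integral_Ioc_eq_integral_Ioo]
    have heq2 : (∫ x in Set.Ioo (0:ℝ) 1, (psi g x - psi g (-x))^2)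
        = ∫ x in Set.Ioo (0:ℝ) 1, φ x ^ 2 := by
      apply setIntegral_congr_fun measurableSet_Ioo
      intro x hx
      simp only
      rw [psi_eq_phi h x ⟨hx.1.le, hx.2.le⟩, psi_nonpos (neg_nonpos.mpr hx.1.le)]
      ring
    rw [heq2, hnorm]
  rw [hsplit, ← hcomp, e6]
  norm_num

lemma stepC {φ g : ℝ → ℝ} (h : InH10 φ g)
    (hnorm : ∫ x in Set.Ioo (0:ℝ) 1, φ x ^ 2 = 1) :
    HasSum (fun k : ℕ =>
      2 * (∫ x in Set.Ioo (0:ℝ) 1, φ x * Real.sin ((k+1 : ℕ) * π * x)) ^ 2) 1 := by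
  haveI : Fact ((0:ℝ) < 2) := ⟨by norm_num⟩
  have hF1 : Fodd g (-1) = Fodd g (-1 + 2) := by
    have h1 : Fodd g 1 = 0 := by
      rw [Fodd_eq_phi h (by norm_num : (1:ℝ) ∈ Set.Icc (0:ℝ) 1), h.2.2.2]
      norm_num
    have h2 : Fodd g (-1) = - Fodd g 1 := Fodd_neg g 1
    rw [show (-1 + 2 : ℝ) = 1 by norm_num, h2, h1]
    norm_num
  have hcont : Continuous (AddCircle.liftIco 2 (-1) (Fodd g)) :=
    AddCircle.liftIco_continuous hF1 ((Fodd_cont h).continuousOn)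
  set ΦL : AddCircle (2:ℝ) → ℂ := AddCircle.liftIco 2 (-1) (Fodd g) with hΦL
  set fL : Lp ℂ 2 (AddCircle.haarAddCircle : Measure (AddCircle (2:ℝ))) :=
    ContinuousMap.toLp (E := ℂ) 2 AddCircle.haarAddCircle ℂ ⟨ΦL, hcont⟩ with hfL
  have hfL_ae : (fL : AddCircle (2:ℝ) → ℂ) =ᵐ[AddCircle.haarAddCircle] ΦL :=
    ContinuousMap.coeFn_toLp (p := 2) (μ := AddCircle.haarAddCircle) (𝕜 := ℂ) ⟨ΦL, hcont⟩
  set r : ℤ → ℝ := fun n => ∫ x in Set.Ioo (0:ℝ) 1, φ x * Real.sin ((n:ℝ) * π * x) with hr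
  have hae_ne1 : ∀ᵐ x : ℝ, x ≠ 1 := by
    refine (ae_iff).mpr ?_
    simp only [not_ne_iff]
    have : {a : ℝ | a = 1} = {(1:ℝ)} := by ext a; simp
    rw [this]; exact Real.volume_singleton
  have hmem_Ico : ∀ᵐ x : ℝ, x ∈ Set.uIoc (-1:ℝ) 1 → x ∈ Set.Ico (-1:ℝ) (-1+2) := by
    filter_upwards [hae_ne1] with x hx1 hxmem
    rw [Set.uIoc_of_le (by norm_num : (-1:ℝ) ≤ 1)] at hxmem
    constructor
    · exact le_of_lt hxmem.1
    · rw [show ((-1:ℝ)+2) = 1 by norm_num]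
      exact lt_of_le_of_ne hxmem.2 hx1
  -- Fourier coefficient computation
  have hcoeff : ∀ n : ℤ, fourierCoeff ΦL n = -Complex.I * ((r n : ℝ) : ℂ) := by
    intro n
    rw [fourierCoeff_eq_intervalIntegral ΦL n (-1)]
    have h1 : ∀ x : ℝ, (fourier (-n) (↑x : AddCircle (2:ℝ))) • ΦL ↑x
        = Complex.exp (-(((n:ℝ) * π * x : ℝ) : ℂ) * Complex.I) * ΦL ↑x := by
      intro x
      rw [smul_eq_mul, fourier_coe_apply]
      congr 1
      push_cast
      ring
    simp only [h1]
    have h2 : (∫ x in (-1:ℝ)..(-1+2), Complex.exp (-(((n:ℝ) * π * x : ℝ) : ℂ) * Complex.I) * ΦL ↑x)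
        = ∫ x in (-1:ℝ)..1, Complex.exp (-(((n:ℝ) * π * x : ℝ) : ℂ) * Complex.I) * Fodd g x := by
      rw [show ((-1:ℝ)+2) = 1 by norm_num]
      apply intervalIntegral.integral_congr_ae
      filter_upwards [hmem_Ico] with x hx1 hxmem
      rw [hΦL, AddCircle.liftIco_coe_apply (hx1 hxmem)]
    rw [h2, coeff_comp h n]
    rw [real_smul]
    push_cast
    ring
  -- Parseval RHS
  have hRHS : (∫ t, ‖(fL : AddCircle (2:ℝ) → ℂ) t‖^2 ∂AddCircle.haarAddCircle) = 1 := by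
    have e1 : (∫ t, ‖(fL : AddCircle (2:ℝ) → ℂ) t‖^2 ∂AddCircle.haarAddCircle)
        = ∫ t, ‖ΦL t‖^2 ∂AddCircle.haarAddCircle := by
      apply MeasureTheory.integral_congr_ae
      filter_upwards [hfL_ae] with t ht
      rw [ht]
    have e2 : (∫ t, ‖ΦL t‖^2 ∂(volume : Measure (AddCircle (2:ℝ))))
        = 2 * ∫ t, ‖ΦL t‖^2 ∂AddCircle.haarAddCircle := by
      rw [AddCircle.volume_eq_smul_haarAddCircle, MeasureTheory.integral_smul_measure]
      rw [ENNReal.toReal_ofReal (by norm_num : (0:ℝ) ≤ 2)]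
      simp [smul_eq_mul]
    have e3 : (∫ x in (-1:ℝ)..(-1+2), ‖ΦL ↑x‖^2)
        = ∫ t, ‖ΦL t‖^2 ∂(volume : Measure (AddCircle (2:ℝ))) :=
      AddCircle.intervalIntegral_preimage 2 (-1) (fun t => ‖ΦL t‖^2)
    have e4 : (∫ x in (-1:ℝ)..(-1+2), ‖ΦL ↑x‖^2) = ∫ x in (-1:ℝ)..1, ‖Fodd g x‖^2 := by
      rw [show ((-1:ℝ)+2) = 1 by norm_num]
      apply intervalIntegral.integral_congr_ae
      filter_upwards [hmem_Ico] with x hx1 hxmem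
      rw [hΦL, AddCircle.liftIco_coe_apply (hx1 hxmem)]
    rw [e1]
    have hval : (∫ t, ‖ΦL t‖^2 ∂(volume : Measure (AddCircle (2:ℝ)))) = 2 := by
      rw [← e3, e4, norm_comp h hnorm]
    rw [hval] at e2
    linarith
  -- coefficients of fL agree with those of ΦL
  have hcoeq : ∀ n : ℤ, fourierCoeff ((fL : AddCircle (2:ℝ) → ℂ)) n = fourierCoeff ΦL n := by
    intro n
    unfold fourierCoeff
    apply MeasureTheory.integral_congr_ae
    filter_upwards [hfL_ae] with t ht
    rw [ht]
  -- summability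
  have hsummable : Summable (fun n : ℤ => ‖fourierCoeff ((fL : AddCircle (2:ℝ) → ℂ)) n‖^2) := by
    have hm := lp.memℓp (fourierBasis.repr fL)
    have hs := hm.summable (by norm_num : 0 < (2 : ℝ≥0∞).toReal)
    have heq : ∀ n : ℤ, ‖fourierBasis.repr fL n‖ ^ (2 : ℝ≥0∞).toReal
        = ‖fourierCoeff ((fL : AddCircle (2:ℝ) → ℂ)) n‖^2 := by
      intro n
      rw [fourierBasis_repr]
      rw [show ((2:ℝ≥0∞)).toReal = ((2:ℕ):ℝ) by norm_num, Real.rpow_natCast]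
    rw [show (fun n : ℤ => ‖fourierCoeff ((fL : AddCircle (2:ℝ) → ℂ)) n‖^2)
      = fun n : ℤ => ‖fourierBasis.repr fL n‖ ^ (2 : ℝ≥0∞).toReal
      from funext fun n => (heq n).symm]
    exact hs
  have hps := tsum_sq_fourierCoeff fL
  have hsZ : HasSum (fun n : ℤ => (r n)^2) 1 := by
    have h1 : HasSum (fun n : ℤ => ‖fourierCoeff ((fL : AddCircle (2:ℝ) → ℂ)) n‖^2)
        (∑' n : ℤ, ‖fourierCoeff ((fL : AddCircle (2:ℝ) → ℂ)) n‖^2) := hsummable.hasSum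
    rw [hps, hRHS] at h1
    have h2 : ∀ n : ℤ, ‖fourierCoeff ((fL : AddCircle (2:ℝ) → ℂ)) n‖^2 = (r n)^2 := by
      intro n
      rw [hcoeq n, hcoeff n, norm_mul, Complex.norm_real]
      simp [Real.norm_eq_abs, _root_.sq_abs]
    rwa [show (fun n : ℤ => ‖fourierCoeff ((fL : AddCircle (2:ℝ) → ℂ)) n‖^2)
      = fun n : ℤ => (r n)^2 from funext h2] at h1
  -- symmetry and reduction to ℕ
  have hr0 : r 0 = 0 := by
    rw [hr]
    simp
  have hrneg : ∀ n : ℤ, r (-n) = - r n := by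
    intro n
    rw [hr]
    simp only [Int.cast_neg, neg_mul, Real.sin_neg]
    rw [← MeasureTheory.integral_neg]
    congr 1
    funext x
    ring
  have hnat := hsZ.nat_add_neg
  have hterm2 : ∀ n : ℕ, r (n:ℤ) ^ 2 + r (-(n:ℤ)) ^ 2 = 2 * r (n:ℤ) ^ 2 := by
    intro n
    rw [hrneg]
    ring
  rw [show (fun n : ℕ => r (n:ℤ) ^2 + r (-(n:ℤ))^2) = fun n : ℕ => 2 * r (n:ℤ)^2
    from funext hterm2] at hnat
  rw [hr0] at hnat
  norm_num at hnat
  have hshift := (hasSum_nat_add_iff' (f := fun n : ℕ => 2 * r (n:ℤ)^2) 1).mpr hnat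
  simp only [Finset.range_one, Finset.sum_singleton, Nat.cast_zero, hr0] at hshift
  norm_num at hshift
  have hfun : (fun n : ℕ => 2 * r (((n+1 : ℕ)) : ℤ)^2)
      = (fun k : ℕ => 2 * (∫ x in Set.Ioo (0:ℝ) 1, φ x * Real.sin ((k+1 : ℕ) * π * x)) ^ 2) := by
    funext n
    rw [hr]
    norm_num
  rw [← hfun]
  exact_mod_cast hshift

end Helpers

section Endgame
open MeasureTheory Real Set Filter

lemma sum_sq_lower (J : ℕ) :
    ((J:ℝ))^3 / 3 ≤ ∑ k ∈ Finset.range J, ((k:ℝ)+1)^2 := by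
  induction J with
  | zero => simp
  | succ n ih =>
    rw [Finset.sum_range_succ]
    push_cast
    nlinarith [ih, Nat.cast_nonneg (α := ℝ) n]

theorem kinetic_energy_lower_bound_of_monotone (φ g : ℕ → ℝ → ℝ)
    (hH : ∀ j, 1 ≤ j → InH10 (φ j) (g j))
    (horth : ∀ i, 1 ≤ i → ∀ j, 1 ≤ j →
      (∫ x in Set.Ioo (0:ℝ) 1, φ i x * φ j x) = if i = j then 1 else 0)
    (hmono : ∀ j, 1 ≤ j →
      (∫ x in Set.Ioo (0:ℝ) 1, (g j x) ^ 2) ≤ ∫ x in Set.Ioo (0:ℝ) 1, (g (j+1) x) ^ 2) :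
    ∀ j : ℕ, 1 ≤ j →
      Real.pi ^ 2 * (j : ℝ) ^ 2 / 3 ≤ ∫ x in Set.Ioo (0:ℝ) 1, (g j x) ^ 2 := by
  intro J hJ
  classical
  set lam : ℕ → ℝ := fun i => ∫ x in Set.Ioo (0:ℝ) 1, (g i x)^2 with hlamdef
  set a : ℕ → ℕ → ℝ :=
    fun i k => ∫ x in Set.Ioo (0:ℝ) 1, φ i x * Real.sin (k * π * x) with hadef
  -- normalization
  have hnorm_i : ∀ i, 1 ≤ i → (∫ x in Set.Ioo (0:ℝ) 1, φ i x ^ 2) = 1 := by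
    intro i hi
    have h1 := horth i hi i hi
    rw [if_pos rfl] at h1
    have heq : (∫ x in Set.Ioo (0:ℝ) 1, φ i x ^ 2)
        = ∫ x in Set.Ioo (0:ℝ) 1, φ i x * φ i x := by
      apply setIntegral_congr_fun measurableSet_Ioo
      intro x _
      simp only
      ring
    rw [heq, h1]
  -- monotonicity of lam
  have hmono' : ∀ i, 1 ≤ i → ∀ i', i ≤ i' → 1 ≤ i' → lam i ≤ lam i' := by
    intro i hi i' hii' hi'
    induction i' with
    | zero => omega
    | succ n ihn =>
      rcases Nat.lt_or_ge i (n+1) with hlt | hge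
      · have hn1 : 1 ≤ n := by omega
        exact le_trans (ihn (by omega) hn1) (hmono n hn1)
      · have : i = n + 1 := by omega
        rw [this]
  -- E1
  have E1 : ∀ i, 1 ≤ i → ∀ K : ℕ,
      (∑ k ∈ Finset.range K, π^2 * (((k:ℝ))+1)^2 * (2 * (a i (k+1))^2)) ≤ lam i := by
    intro i hi K
    have hB := stepB (hH i hi) K
    refine le_trans (le_of_eq ?_) hB
    apply Finset.sum_congr rfl
    intro k _
    have hA := stepA (hH i hi) (k+1) (by omega)
    have hkπ : (((k+1:ℕ)):ℝ) * π ≠ 0 := by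
      have := Real.pi_pos
      positivity
    have hgc : (∫ x in Set.Ioo (0:ℝ) 1, g i x * Real.cos ((k+1:ℕ) * π * x))
        = (((k+1:ℕ)):ℝ) * π * a i (k+1) := by
      rw [hadef]
      simp only
      rw [hA]
      field_simp
    rw [hgc]
    push_cast
    ring
  -- E2
  have E2 : ∀ i, 1 ≤ i → HasSum (fun k : ℕ => 2 * (a i (k+1))^2) 1 := by
    intro i hi
    exact stepC (hH i hi) (hnorm_i i hi)
  -- E3
  have E3 : ∀ k, 1 ≤ k → (∑ i ∈ Finset.range J, 2 * (a (i+1) k)^2) ≤ 1 :=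
    fun k hk => stepD φ g hH horth J k hk
  -- the column sums
  set d : ℕ → ℝ := fun k => ∑ i ∈ Finset.range J, 2 * (a (i+1) (k+1))^2 with hddef
  have hd_nonneg : ∀ k, 0 ≤ d k := by
    intro k
    apply Finset.sum_nonneg
    intro i _
    positivity
  have hd_le_one : ∀ k, d k ≤ 1 := fun k => E3 (k+1) (by omega)
  set S : ℕ → ℝ := fun K => ∑ k ∈ Finset.range K, d k with hSdef
  -- S tends to J
  have hS_tendsto : Tendsto S atTop (nhds (J:ℝ)) := by
    have hterm : ∀ i ∈ Finset.range J,
        Tendsto (fun K => ∑ k ∈ Finset.range K, 2 * (a (i+1) (k+1))^2) atTop (nhds 1) :=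
      fun i _ => (E2 (i+1) (by omega)).tendsto_sum_nat
    have hsum := tendsto_finset_sum (Finset.range J) hterm
    have heqS : S = fun K => ∑ i ∈ Finset.range J,
        ∑ k ∈ Finset.range K, 2 * (a (i+1) (k+1))^2 := by
      funext K
      rw [hSdef]
      simp only
      rw [Finset.sum_comm]
    rw [heqS]
    convert hsum using 2
    simp
  set B : ℝ := ∑ k ∈ Finset.range J, ((k:ℝ)+1)^2 with hBdef
  -- key finite inequality
  have key : ∀ K : ℕ, J ≤ K →
      B + (J:ℝ)^2 * (S K - (J:ℝ)) ≤ ∑ k ∈ Finset.range K, ((k:ℝ)+1)^2 * d k := by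
    intro K hK
    have hterm : ∀ k ∈ Finset.range K,
        (J:ℝ)^2 * d k + (if k < J then ((k:ℝ)+1)^2 - (J:ℝ)^2 else 0)
          ≤ ((k:ℝ)+1)^2 * d k := by
      intro k _
      by_cases hkJ : k < J
      · rw [if_pos hkJ]
        have hkk : ((k:ℝ)+1) ≤ (J:ℝ) := by
          have : (k+1 : ℕ) ≤ J := hkJ
          exact_mod_cast this
        have h1 : ((k:ℝ)+1)^2 ≤ (J:ℝ)^2 := by nlinarith [Nat.cast_nonneg (α := ℝ) k]
        nlinarith [hd_nonneg k, hd_le_one k]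
      · rw [if_neg hkJ]
        have hkk : (J:ℝ) ≤ ((k:ℝ)+1) := by
          have : J ≤ k + 1 := by omega
          exact_mod_cast this
        have h1 : (J:ℝ)^2 ≤ ((k:ℝ)+1)^2 := by
          nlinarith [hkk, Nat.cast_nonneg (α := ℝ) J]
        nlinarith [hd_nonneg k]
    have hsum := Finset.sum_le_sum hterm
    rw [Finset.sum_add_distrib] at hsum
    have hsum1 : (∑ k ∈ Finset.range K, (J:ℝ)^2 * d k) = (J:ℝ)^2 * S K := by
      rw [hSdef, Finset.mul_sum]
    have hsum2 : (∑ k ∈ Finset.range K, (if k < J then ((k:ℝ)+1)^2 - (J:ℝ)^2 else 0))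
        = B - (J:ℝ) * (J:ℝ)^2 := by
      rw [← Finset.sum_subset (Finset.range_subset_range.mpr hK)
        (fun x _ hx => if_neg (by simpa using hx))]
      have : ∀ k ∈ Finset.range J, (if k < J then ((k:ℝ)+1)^2 - (J:ℝ)^2 else 0)
          = ((k:ℝ)+1)^2 - (J:ℝ)^2 := by
        intro k hk
        rw [if_pos (Finset.mem_range.mp hk)]
      rw [Finset.sum_congr rfl this, Finset.sum_sub_distrib, Finset.sum_const,
        Finset.card_range, hBdef]
      push_cast
      ring
    rw [hsum1, hsum2] at hsum
    linarith
  -- main chain: for K ≥ J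
  have hchain : ∀ K : ℕ, J ≤ K →
      π^2 * (B + (J:ℝ)^2 * (S K - (J:ℝ))) ≤ (J:ℝ) * lam J := by
    intro K hK
    have h1 : (∑ i ∈ Finset.range J, lam (i+1)) ≤ (J:ℝ) * lam J := by
      have : ∀ i ∈ Finset.range J, lam (i+1) ≤ lam J := by
        intro i hi
        exact hmono' (i+1) (by omega) J (by have := Finset.mem_range.mp hi; omega) hJ
      calc (∑ i ∈ Finset.range J, lam (i+1)) ≤ ∑ i ∈ Finset.range J, lam J :=
            Finset.sum_le_sum this
        _ = (J:ℝ) * lam J := by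
            rw [Finset.sum_const, Finset.card_range, nsmul_eq_mul]
    have h2 : π^2 * (∑ k ∈ Finset.range K, ((k:ℝ)+1)^2 * d k)
        ≤ ∑ i ∈ Finset.range J, lam (i+1) := by
      have h3 : ∀ i ∈ Finset.range J,
          (∑ k ∈ Finset.range K, π^2 * (((k:ℝ))+1)^2 * (2 * (a (i+1) (k+1))^2)) ≤ lam (i+1) :=
        fun i _ => E1 (i+1) (by omega) K
      have h4 := Finset.sum_le_sum h3
      refine le_trans (le_of_eq ?_) h4
      rw [Finset.sum_comm]
      rw [Finset.mul_sum]
      apply Finset.sum_congr rfl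
      intro k _
      rw [hddef]
      simp only
      rw [Finset.mul_sum, Finset.mul_sum]
      apply Finset.sum_congr rfl
      intro i _
      ring
    have h5 := key K hK
    have hπ2 : (0:ℝ) ≤ π^2 := sq_nonneg π
    nlinarith [mul_le_mul_of_nonneg_left h5 hπ2]
  -- take the limit
  have hL : Tendsto (fun K => π^2 * (B + (J:ℝ)^2 * (S K - (J:ℝ)))) atTop
      (nhds (π^2 * (B + (J:ℝ)^2 * ((J:ℝ) - (J:ℝ))))) := by
    apply Tendsto.const_mul
    apply Tendsto.const_add
    apply Tendsto.const_mul
    exact hS_tendsto.sub_const (J:ℝ)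
  have hlim : π^2 * B ≤ (J:ℝ) * lam J := by
    have h0 : π^2 * (B + (J:ℝ)^2 * ((J:ℝ) - (J:ℝ))) = π^2 * B := by ring
    rw [h0] at hL
    exact le_of_tendsto hL (Filter.eventually_atTop.mpr ⟨J, fun K hK => hchain K hK⟩)
  -- conclude
  have hBlow : ((J:ℝ))^3 / 3 ≤ B := sum_sq_lower J
  have hJpos : (0:ℝ) < (J:ℝ) := by exact_mod_cast hJ
  have hπ2 : (0:ℝ) ≤ π^2 := sq_nonneg π
  have hfinal : (J:ℝ) * (π^2 * (J:ℝ)^2 / 3) ≤ (J:ℝ) * lam J := by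
    have : π^2 * (((J:ℝ))^3/3) ≤ π^2 * B := by
      exact mul_le_mul_of_nonneg_left hBlow hπ2
    nlinarith
  exact le_of_mul_le_mul_left hfinal hJpos

end Endgame
end

section
/- Let (φ_j)_{j≥1} be a sequence of functions ℝ → ℝ such that each φ_j lies in H¹₀(0,1) with derivative g_j and the family is orthonormal in L²(0,1) (∫₀¹ φ_i φ_j dx = δ_{ij} for all i, j ≥ 1). Then the sequence of kinetic energies diverges: ∫₀¹ g_j(x)² dx → ∞ as j → ∞. -/
open MeasureTheory Set


-- g is integrable if g^2 is
lemma g_integrable_s2 {g : ℝ → ℝ} (hm : Measurable g)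
    (h2 : IntegrableOn (fun t => g t ^ 2) (Set.Ioo 0 1)) :
    IntegrableOn g (Set.Ioo (0:ℝ) 1) := by
  have hb : Integrable (fun t => (g t ^ 2 + 1) / 2) (volume.restrict (Set.Ioo (0:ℝ) 1)) := by
    exact (h2.add (integrableOn_const (by simp))).div_const 2
  refine Integrable.mono' hb (hm.aestronglyMeasurable.restrict) ?_
  filter_upwards with t
  have := sq_nonneg (|g t| - 1)
  rw [Real.norm_eq_abs]
  nlinarith [sq_abs (g t)]

-- Cauchy–Schwarz
lemma cs_integral {s : Set ℝ} (hs : MeasurableSet s) (hfin : volume s ≠ ⊤) {f : ℝ → ℝ}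
    (hf : IntegrableOn f s) (hf2 : IntegrableOn (fun t => f t ^ 2) s) :
    (∫ t in s, |f t|) ^ 2 ≤ (volume s).toReal * ∫ t in s, f t ^ 2 := by
  set m := (volume s).toReal with hm
  rcases eq_or_lt_of_le (ENNReal.toReal_nonneg : 0 ≤ m) with h0 | hpos
  · have hz : volume s = 0 := by
      have := ENNReal.toReal_eq_zero_iff (volume s)
      rcases this.1 h0.symm with h | h
      · exact h
      · exact absurd h hfin
    rw [Measure.restrict_eq_zero.2 hz]
    simp
  · set I := ∫ t in s, |f t| with hI
    set E := ∫ t in s, f t ^ 2 with hE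
    set l := I / m with hl
    have hm0 : m ≠ 0 := ne_of_gt hpos
    have hlm : l * m = I := div_mul_cancel₀ I hm0
    have habs : IntegrableOn (fun t => |f t|) s := hf.abs
    have hconst : IntegrableOn (fun _ : ℝ => l ^ 2) s :=
      integrableOn_const hfin
    have h0 : 0 ≤ ∫ t in s, (|f t| - l) ^ 2 := integral_nonneg fun t => sq_nonneg _
    have hexp : ∀ t, (|f t| - l) ^ 2 = (f t ^ 2 - 2 * l * |f t|) + l ^ 2 := by
      intro t
      have := sq_abs (f t)
      nlinarith
    rw [integral_congr_ae (Filter.Eventually.of_forall hexp)] at h0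
    have hA : ∫ t in s, (f t ^ 2 - 2 * l * |f t| + l ^ 2) =
        (∫ t in s, (f t ^ 2 - 2 * l * |f t|)) + ∫ _t in s, (l ^ 2 : ℝ) :=
      integral_add (by exact hf2.sub (habs.const_mul (2 * l))) hconst
    have hB : ∫ t in s, (f t ^ 2 - 2 * l * |f t|) =
        (∫ t in s, f t ^ 2) - ∫ t in s, 2 * l * |f t| :=
      integral_sub hf2 (by exact habs.const_mul (2 * l))
    have hC : ∫ t in s, 2 * l * |f t| = 2 * l * I := by
      rw [integral_const_mul]
    rw [hA, hB, hC, setIntegral_const, smul_eq_mul, measureReal_def] at h0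
    nlinarith [h0, hpos, hlm]

lemma InH10.g_int {φ g : ℝ → ℝ} (h : InH10 φ g) : IntegrableOn g (Set.Ioo (0:ℝ) 1) :=
  g_integrable_s2 h.1 h.2.1

lemma InH10.phi_eq {φ g : ℝ → ℝ} (h : InH10 φ g) {x : ℝ} (hx : x ∈ Set.Icc (0:ℝ) 1) :
    φ x = ∫ t in Set.Ioo (0:ℝ) x, g t := by
  rw [h.2.2.1 x hx, intervalIntegral.integral_of_le hx.1, integral_Ioc_eq_integral_Ioo]

lemma InH10.phi_contOn {φ g : ℝ → ℝ} (h : InH10 φ g) : ContinuousOn φ (Set.Icc (0:ℝ) 1) := by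
  have hgI : IntegrableOn g (Set.Icc (0:ℝ) 1) :=
    (integrableOn_Icc_iff_integrableOn_Ioo).2 h.g_int
  have hc : ContinuousOn (fun x => ∫ t in (0:ℝ)..x, g t) (Set.Icc (0:ℝ) 1) := by
    have := intervalIntegral.continuousOn_primitive_interval
      (a := (0:ℝ)) (b := (1:ℝ)) (f := g) (μ := volume) (by rwa [Set.uIcc_of_le zero_le_one])
    rwa [Set.uIcc_of_le zero_le_one] at this
  exact hc.congr h.2.2.1

lemma contOn_intOn {f : ℝ → ℝ} (hf : ContinuousOn f (Set.Icc (0:ℝ) 1)) :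
    IntegrableOn f (Set.Ioo (0:ℝ) 1) :=
  (hf.integrableOn_Icc).mono_set Set.Ioo_subset_Icc_self

lemma split_int {f : ℝ → ℝ} (hf : IntegrableOn f (Set.Icc (0:ℝ) 1)) {y x : ℝ}
    (h0 : 0 ≤ y) (hyx : y ≤ x) (h1 : x ≤ 1) :
    ∫ u in Set.Ioo (0:ℝ) x, f u = (∫ u in Set.Ioo (0:ℝ) y, f u) + ∫ u in Set.Ioo y x, f u := by
  have hs1 : Set.Ioc (0:ℝ) y ⊆ Set.Icc (0:ℝ) 1 := fun u hu =>
    ⟨le_of_lt hu.1, hu.2.trans (hyx.trans h1)⟩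
  have hs2 : Set.Ioc y x ⊆ Set.Icc (0:ℝ) 1 := fun u hu =>
    ⟨h0.trans (le_of_lt hu.1), hu.2.trans h1⟩
  rw [← integral_Ioc_eq_integral_Ioo, ← integral_Ioc_eq_integral_Ioo,
    ← integral_Ioc_eq_integral_Ioo, ← Set.Ioc_union_Ioc_eq_Ioc h0 hyx,
    setIntegral_union (Set.Ioc_disjoint_Ioc_of_le le_rfl) measurableSet_Ioc
      (hf.mono_set hs1) (hf.mono_set hs2)]

lemma holder_bound {φ g : ℝ → ℝ} (h : InH10 φ g)
    (hnorm : (∫ t in Set.Ioo (0:ℝ) 1, φ t ^ 2) = 1) {y x : ℝ}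
    (h0 : 0 ≤ y) (hyx : y ≤ x) (h1 : x ≤ 1) :
    |(∫ t in Set.Ioo (0:ℝ) x, φ t) - ∫ t in Set.Ioo (0:ℝ) y, φ t| ≤ Real.sqrt (x - y) := by
  have hφc := h.phi_contOn
  have hφI : IntegrableOn φ (Set.Icc (0:ℝ) 1) := hφc.integrableOn_Icc
  have hφ2I : IntegrableOn (fun t => φ t ^ 2) (Set.Ioo (0:ℝ) 1) :=
    contOn_intOn (by exact hφc.pow 2)
  have hsub : Set.Ioo y x ⊆ Set.Ioo (0:ℝ) 1 := fun u hu =>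
    ⟨lt_of_le_of_lt h0 hu.1, lt_of_lt_of_le hu.2 h1⟩
  have hdiff : (∫ t in Set.Ioo (0:ℝ) x, φ t) - (∫ t in Set.Ioo (0:ℝ) y, φ t)
      = ∫ t in Set.Ioo y x, φ t := by
    rw [split_int hφI h0 hyx h1]; ring
  rw [hdiff]
  have hJ : |∫ t in Set.Ioo y x, φ t| ≤ ∫ t in Set.Ioo y x, |φ t| := by
    simpa [Real.norm_eq_abs] using
      norm_integral_le_integral_norm (μ := volume.restrict (Set.Ioo y x)) φ
  have hE2 : (∫ t in Set.Ioo y x, φ t ^ 2) ≤ ∫ t in Set.Ioo (0:ℝ) 1, φ t ^ 2 := by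
    refine setIntegral_mono_set hφ2I ?_ hsub.eventuallyLE
    filter_upwards with t using sq_nonneg _
  have hcs := cs_integral measurableSet_Ioo (by simp) (hφI.mono_set (hsub.trans Set.Ioo_subset_Icc_self))
    (hφ2I.mono_set hsub)
  rw [Real.volume_Ioo, ENNReal.toReal_ofReal (sub_nonneg.2 hyx)] at hcs
  have hJ0 : 0 ≤ ∫ t in Set.Ioo y x, |φ t| := integral_nonneg fun t => abs_nonneg _
  have hJle : (∫ t in Set.Ioo y x, |φ t|) ≤ Real.sqrt (x - y) := by
    rw [← Real.sqrt_sq hJ0]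
    apply Real.sqrt_le_sqrt
    calc (∫ t in Set.Ioo y x, |φ t|) ^ 2 ≤ (x - y) * ∫ t in Set.Ioo y x, φ t ^ 2 := hcs
      _ ≤ (x - y) * 1 := by
          apply mul_le_mul_of_nonneg_left (hE2.trans_eq hnorm) (sub_nonneg.2 hyx)
      _ = x - y := mul_one _
  exact hJ.trans hJle

lemma bessel_sum (φ g : ℕ → ℝ → ℝ)
    (hH : ∀ j, 1 ≤ j → InH10 (φ j) (g j))
    (horth : ∀ i, 1 ≤ i → ∀ j, 1 ≤ j →
      (∫ x in Set.Ioo (0:ℝ) 1, φ i x * φ j x) = if i = j then 1 else 0)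
    {x : ℝ} (hx : x ∈ Set.Icc (0:ℝ) 1) (N : ℕ) :
    ∑ j ∈ Finset.Icc 1 N, (∫ t in Set.Ioo (0:ℝ) x, φ j t) ^ 2 ≤ 1 := by
  set c : ℕ → ℝ := fun j => ∫ t in Set.Ioo (0:ℝ) x, φ j t with hc
  set s : Finset ℕ := Finset.Icc 1 N with hsdef
  have hmem : ∀ j ∈ s, 1 ≤ j := fun j hj => (Finset.mem_Icc.1 hj).1
  set ind : ℝ → ℝ := (Set.Ioo (0:ℝ) x).indicator (fun _ => (1:ℝ)) with hind
  set ssum : ℝ → ℝ := fun t => ∑ j ∈ s, c j * φ j t with hssum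
  have hsub : Set.Ioo (0:ℝ) x ⊆ Set.Ioo (0:ℝ) 1 := fun u hu => ⟨hu.1, lt_of_lt_of_le hu.2 hx.2⟩
  have hφI : ∀ j ∈ s, IntegrableOn (φ j) (Set.Ioo (0:ℝ) 1) := fun j hj =>
    contOn_intOn (hH j (hmem j hj)).phi_contOn
  have hprod : ∀ i ∈ s, ∀ j ∈ s, IntegrableOn (fun t => φ i t * φ j t) (Set.Ioo (0:ℝ) 1) :=
    fun i hi j hj => contOn_intOn
      ((hH i (hmem i hi)).phi_contOn.mul (hH j (hmem j hj)).phi_contOn)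
  have hindeq : ∀ j, (fun t => ind t * φ j t) = Set.indicator (Set.Ioo (0:ℝ) x) (φ j) := by
    intro j; funext t
    by_cases ht : t ∈ Set.Ioo (0:ℝ) x <;>
      simp [hind, Set.indicator_of_mem, Set.indicator_of_notMem, ht]
  have hcval : ∀ j, (∫ t in Set.Ioo (0:ℝ) 1, Set.indicator (Set.Ioo (0:ℝ) x) (φ j) t) = c j := by
    intro j
    rw [integral_indicator measurableSet_Ioo, Measure.restrict_restrict measurableSet_Ioo,
      Set.inter_eq_self_of_subset_left hsub]
  have hindφ : ∀ j ∈ s, Integrable (fun t => ind t * φ j t)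
      (volume.restrict (Set.Ioo (0:ℝ) 1)) := by
    intro j hj
    rw [hindeq j]
    exact (hφI j hj).indicator measurableSet_Ioo
  have hT1 : Integrable ind (volume.restrict (Set.Ioo (0:ℝ) 1)) := by
    have h1 : Integrable (fun _ : ℝ => (1:ℝ)) (volume.restrict (Set.Ioo (0:ℝ) 1)) :=
      integrableOn_const (by simp)
    exact h1.indicator measurableSet_Ioo
  have key : (0:ℝ) ≤ ∫ t in Set.Ioo (0:ℝ) 1, (ind t - ssum t) ^ 2 :=
    integral_nonneg fun t => sq_nonneg _
  have expand : ∀ t, (ind t - ssum t) ^ 2 =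
      ind t - 2 * (∑ j ∈ s, c j * (ind t * φ j t))
        + ∑ i ∈ s, ∑ j ∈ s, (c i * c j) * (φ i t * φ j t) := by
    intro t
    have hii : ind t ^ 2 = ind t := by
      by_cases ht : t ∈ Set.Ioo (0:ℝ) x <;> simp [hind, ht]
    have h2 : ind t * ssum t = ∑ j ∈ s, c j * (ind t * φ j t) := by
      rw [hssum, Finset.mul_sum]
      exact Finset.sum_congr rfl fun j _ => by ring
    have h3 : ssum t * ssum t = ∑ i ∈ s, ∑ j ∈ s, (c i * c j) * (φ i t * φ j t) := by
      rw [hssum, Finset.sum_mul_sum]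
      refine Finset.sum_congr rfl fun i _ => Finset.sum_congr rfl fun j _ => by ring
    calc (ind t - ssum t) ^ 2 = ind t ^ 2 - 2 * (ind t * ssum t) + ssum t * ssum t := by ring
      _ = ind t - 2 * (∑ j ∈ s, c j * (ind t * φ j t))
          + ∑ i ∈ s, ∑ j ∈ s, (c i * c j) * (φ i t * φ j t) := by rw [hii, h2, h3]
  rw [integral_congr_ae (Filter.Eventually.of_forall expand)] at key
  have hT2int : Integrable (fun t => ∑ j ∈ s, c j * (ind t * φ j t))
      (volume.restrict (Set.Ioo (0:ℝ) 1)) :=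
    integrable_finset_sum s fun j hj => (hindφ j hj).const_mul (c j)
  have hT3int : Integrable (fun t => ∑ i ∈ s, ∑ j ∈ s, (c i * c j) * (φ i t * φ j t))
      (volume.restrict (Set.Ioo (0:ℝ) 1)) :=
    integrable_finset_sum s fun i hi =>
      integrable_finset_sum s fun j hj => (hprod i hi j hj).const_mul (c i * c j)
  have hsplit : ∫ t in Set.Ioo (0:ℝ) 1,
      (ind t - 2 * (∑ j ∈ s, c j * (ind t * φ j t))
        + ∑ i ∈ s, ∑ j ∈ s, (c i * c j) * (φ i t * φ j t)) =
      ((∫ t in Set.Ioo (0:ℝ) 1, ind t)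
        - ∫ t in Set.Ioo (0:ℝ) 1, 2 * (∑ j ∈ s, c j * (ind t * φ j t)))
        + ∫ t in Set.Ioo (0:ℝ) 1, ∑ i ∈ s, ∑ j ∈ s, (c i * c j) * (φ i t * φ j t) := by
    rw [integral_add (by exact hT1.sub (hT2int.const_mul 2)) hT3int,
      integral_sub hT1 (by exact hT2int.const_mul 2)]
  rw [hsplit] at key
  have hv1 : (∫ t in Set.Ioo (0:ℝ) 1, ind t) = x := by
    rw [hind, integral_indicator measurableSet_Ioo, setIntegral_const, measureReal_def,
      Measure.restrict_apply measurableSet_Ioo, Set.inter_eq_self_of_subset_left hsub,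
      Real.volume_Ioo, ENNReal.toReal_ofReal (by linarith [hx.1] : (0:ℝ) ≤ x - 0)]
    simp
  have hv2 : (∫ t in Set.Ioo (0:ℝ) 1, 2 * (∑ j ∈ s, c j * (ind t * φ j t)))
      = 2 * ∑ j ∈ s, c j * c j := by
    rw [integral_const_mul, integral_finset_sum s fun j hj => (hindφ j hj).const_mul (c j)]
    congr 1
    refine Finset.sum_congr rfl fun j hj => ?_
    rw [integral_const_mul, hindeq j, hcval j]
  have hv3 : (∫ t in Set.Ioo (0:ℝ) 1, ∑ i ∈ s, ∑ j ∈ s, (c i * c j) * (φ i t * φ j t))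
      = ∑ i ∈ s, c i * c i := by
    rw [integral_finset_sum s fun i hi =>
      integrable_finset_sum s fun j hj => (hprod i hi j hj).const_mul (c i * c j)]
    refine Finset.sum_congr rfl fun i hi => ?_
    rw [integral_finset_sum s fun j hj => (hprod i hi j hj).const_mul (c i * c j)]
    have : ∀ j ∈ s, (∫ t in Set.Ioo (0:ℝ) 1, (c i * c j) * (φ i t * φ j t))
        = if i = j then c i * c j else 0 := by
      intro j hj
      rw [integral_const_mul, horth i (hmem i hi) j (hmem j hj)]
      by_cases h : i = j <;> simp [h]
    rw [Finset.sum_congr rfl this, Finset.sum_ite_eq s i (fun j => c i * c j), if_pos hi]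
  rw [hv1, hv2, hv3] at key
  have hA : ∑ j ∈ s, c j * c j ≤ x := by linarith
  calc ∑ j ∈ s, c j ^ 2 = ∑ j ∈ s, c j * c j := Finset.sum_congr rfl fun j _ => sq (c j)
    _ ≤ x := hA
    _ ≤ 1 := hx.2

lemma norm_one (φ : ℕ → ℝ → ℝ)
    (horth : ∀ i, 1 ≤ i → ∀ j, 1 ≤ j →
      (∫ x in Set.Ioo (0:ℝ) 1, φ i x * φ j x) = if i = j then 1 else 0)
    {j : ℕ} (hj : 1 ≤ j) : (∫ t in Set.Ioo (0:ℝ) 1, φ j t ^ 2) = 1 := by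
  have := horth j hj j hj
  simp only [if_true, eq_self_iff_true] at this
  calc (∫ t in Set.Ioo (0:ℝ) 1, φ j t ^ 2) = ∫ t in Set.Ioo (0:ℝ) 1, φ j t * φ j t :=
        integral_congr_ae (Filter.Eventually.of_forall fun t => sq (φ j t))
    _ = 1 := this

lemma pointwise_zero (φ g : ℕ → ℝ → ℝ)
    (hH : ∀ j, 1 ≤ j → InH10 (φ j) (g j))
    (horth : ∀ i, 1 ≤ i → ∀ j, 1 ≤ j →
      (∫ x in Set.Ioo (0:ℝ) 1, φ i x * φ j x) = if i = j then 1 else 0)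
    {x : ℝ} (hx : x ∈ Set.Icc (0:ℝ) 1) :
    Filter.Tendsto (fun j => (∫ t in Set.Ioo (0:ℝ) x, φ j t) ^ 2) Filter.atTop (nhds 0) := by
  set c : ℕ → ℝ := fun j => ∫ t in Set.Ioo (0:ℝ) x, φ j t with hc
  have hsummable : Summable (fun i : ℕ => c (1 + i) ^ 2) := by
    refine summable_of_sum_range_le (c := 1) (fun i => sq_nonneg _) (fun n => ?_)
    have hb := bessel_sum φ g hH horth hx n
    have heq : ∑ j ∈ Finset.Icc 1 n, c j ^ 2 = ∑ i ∈ Finset.range n, c (1 + i) ^ 2 := by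
      rw [← Finset.Ico_add_one_right_eq_Icc, Finset.sum_Ico_eq_sum_range]
      simp
    rw [← heq]
    exact hb
  have h1 : Filter.Tendsto (fun i : ℕ => c (i + 1) ^ 2) Filter.atTop (nhds 0) := by
    have := hsummable.tendsto_atTop_zero
    simpa [add_comm] using this
  exact (Filter.tendsto_add_atTop_iff_nat 1).1 h1

lemma uniform_small (φ g : ℕ → ℝ → ℝ)
    (hH : ∀ j, 1 ≤ j → InH10 (φ j) (g j))
    (horth : ∀ i, 1 ≤ i → ∀ j, 1 ≤ j →
      (∫ x in Set.Ioo (0:ℝ) 1, φ i x * φ j x) = if i = j then 1 else 0)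
    {δ : ℝ} (hδ : 0 < δ) :
    ∀ᶠ j in Filter.atTop, ∀ x ∈ Set.Icc (0:ℝ) 1,
      |∫ t in Set.Ioo (0:ℝ) x, φ j t| ≤ δ := by
  obtain ⟨n, hn⟩ := exists_nat_gt (4 / δ ^ 2)
  have hn0 : (0:ℝ) < n := lt_trans (by positivity) hn
  have hinv : (1:ℝ) / n < δ ^ 2 / 4 := by
    rw [div_lt_div_iff₀ hn0 (by norm_num)]
    have h4 : 4 < (n:ℝ) * δ ^ 2 := (div_lt_iff₀ (by positivity)).1 hn
    linarith
  have hgrid : ∀ᶠ j in Filter.atTop, ∀ k ∈ Finset.range (n + 1),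
      |∫ t in Set.Ioo (0:ℝ) ((k : ℝ) / n), φ j t| ≤ δ / 2 := by
    rw [Filter.eventually_all_finset]
    intro k hk
    have hkn : (k:ℝ) ≤ n := by
      exact_mod_cast Nat.le_of_lt_succ (Finset.mem_range.1 hk)
    have hxmem : (k:ℝ) / n ∈ Set.Icc (0:ℝ) 1 :=
      ⟨by positivity, (div_le_one hn0).2 hkn⟩
    have hp := pointwise_zero φ g hH horth hxmem
    have hev : ∀ᶠ j in Filter.atTop,
        (∫ t in Set.Ioo (0:ℝ) ((k : ℝ) / n), φ j t) ^ 2 < (δ / 2) ^ 2 :=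
      hp.eventually (gt_mem_nhds (by positivity))
    filter_upwards [hev] with j hj
    have h0 : |∫ t in Set.Ioo (0:ℝ) ((k : ℝ) / n), φ j t|
        = Real.sqrt ((∫ t in Set.Ioo (0:ℝ) ((k : ℝ) / n), φ j t) ^ 2) :=
      (Real.sqrt_sq_eq_abs _).symm
    rw [h0, show δ / 2 = Real.sqrt ((δ / 2) ^ 2) from (Real.sqrt_sq (by positivity)).symm]
    exact Real.sqrt_le_sqrt hj.le
  filter_upwards [hgrid, Filter.eventually_ge_atTop 1] with j hj hj1
  intro x hx
  set k := ⌊x * n⌋₊ with hkdef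
  have hxn0 : (0:ℝ) ≤ x * n := by nlinarith [hx.1]
  have hk_le : (k:ℝ) ≤ x * n := Nat.floor_le hxn0
  have hklt : x * n < k + 1 := Nat.lt_floor_add_one _
  have hkn : (k:ℝ) ≤ n := le_trans hk_le (by nlinarith [hx.2])
  have hkmem : k ∈ Finset.range (n + 1) := by
    refine Finset.mem_range.2 (Nat.lt_succ_of_le ?_)
    exact_mod_cast hkn
  set y := (k:ℝ) / n with hydef
  have hy0 : 0 ≤ y := by positivity
  have hyx : y ≤ x := (div_le_iff₀ hn0).2 hk_le
  have hxy : x - y ≤ 1 / n := by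
    rw [hydef, sub_le_iff_le_add, ← add_div, le_div_iff₀ hn0]
    linarith
  have hnorm := norm_one φ horth hj1
  have hhol := holder_bound (hH j hj1) hnorm hy0 hyx hx.2
  have hsq : Real.sqrt (x - y) ≤ δ / 2 := by
    rw [show δ / 2 = Real.sqrt ((δ / 2) ^ 2) from (Real.sqrt_sq (by positivity)).symm]
    apply Real.sqrt_le_sqrt
    nlinarith
  have htri : |∫ t in Set.Ioo (0:ℝ) x, φ j t|
      ≤ |∫ t in Set.Ioo (0:ℝ) y, φ j t|
        + |(∫ t in Set.Ioo (0:ℝ) x, φ j t) - ∫ t in Set.Ioo (0:ℝ) y, φ j t| := by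
    have := abs_add_le (∫ t in Set.Ioo (0:ℝ) y, φ j t)
      ((∫ t in Set.Ioo (0:ℝ) x, φ j t) - ∫ t in Set.Ioo (0:ℝ) y, φ j t)
    simpa using this
  have hgridj := hj k hkmem
  calc |∫ t in Set.Ioo (0:ℝ) x, φ j t|
      ≤ |∫ t in Set.Ioo (0:ℝ) y, φ j t|
        + |(∫ t in Set.Ioo (0:ℝ) x, φ j t) - ∫ t in Set.Ioo (0:ℝ) y, φ j t| := htri
    _ ≤ δ / 2 + δ / 2 := add_le_add hgridj (hhol.trans hsq)
    _ = δ := by ring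

lemma fubini_identity {φ g : ℝ → ℝ} (h : InH10 φ g)
    (hnorm : (∫ t in Set.Ioo (0:ℝ) 1, φ t ^ 2) = 1) :
    (1:ℝ) = ∫ t in Set.Ioo (0:ℝ) 1,
      g t * ((∫ u in Set.Ioo (0:ℝ) 1, φ u) - ∫ u in Set.Ioo (0:ℝ) t, φ u) := by
  set μ := volume.restrict (Set.Ioo (0:ℝ) 1) with hμ
  set f : ℝ → ℝ → ℝ := fun x t => if t < x then φ x * g t else 0 with hf
  have hφc := h.phi_contOn
  have hφI : IntegrableOn φ (Set.Ioo (0:ℝ) 1) := contOn_intOn hφc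
  have hφIcc : IntegrableOn φ (Set.Icc (0:ℝ) 1) := hφc.integrableOn_Icc
  have hgI : IntegrableOn g (Set.Ioo (0:ℝ) 1) := h.g_int
  have hunc : Integrable (Function.uncurry f) (μ.prod μ) := by
    have hpm : Integrable (fun p : ℝ × ℝ => φ p.1 * g p.2) (μ.prod μ) :=
      Integrable.mul_prod hφI hgI
    have heq : Function.uncurry f
        = Set.indicator {p : ℝ × ℝ | p.2 < p.1} (fun p => φ p.1 * g p.2) := by
      funext p
      simp only [Function.uncurry, hf, Set.indicator_apply, Set.mem_setOf_eq]
    rw [heq]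
    exact hpm.indicator (measurableSet_lt measurable_snd measurable_fst)
  have hswap := integral_integral_swap hunc
  have hL : (∫ x, ∫ t, f x t ∂μ ∂μ) = 1 := by
    have : (∫ x, ∫ t, f x t ∂μ ∂μ) = ∫ x in Set.Ioo (0:ℝ) 1, φ x ^ 2 := by
      refine setIntegral_congr_fun measurableSet_Ioo (fun x hx => ?_)
      have hin : (fun t => f x t) = Set.indicator (Set.Iio x) (fun t => φ x * g t) := by
        funext t
        simp only [hf, Set.indicator_apply, Set.mem_Iio]
      rw [hin, hμ, integral_indicator measurableSet_Iio,
        Measure.restrict_restrict measurableSet_Iio]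
      have hint : Set.Iio x ∩ Set.Ioo (0:ℝ) 1 = Set.Ioo 0 x := by
        ext t
        simp only [Set.mem_inter_iff, Set.mem_Iio, Set.mem_Ioo]
        constructor
        · rintro ⟨h1, h2, _⟩; exact ⟨h2, h1⟩
        · rintro ⟨h1, h2⟩; exact ⟨h2, h1, h2.trans hx.2⟩
      rw [hint, integral_const_mul, ← h.phi_eq ⟨hx.1.le, hx.2.le⟩, ← sq]
    rw [this, hnorm]
  have hR : (∫ t, ∫ x, f x t ∂μ ∂μ) = ∫ t in Set.Ioo (0:ℝ) 1,
      g t * ((∫ u in Set.Ioo (0:ℝ) 1, φ u) - ∫ u in Set.Ioo (0:ℝ) t, φ u) := by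
    refine setIntegral_congr_fun measurableSet_Ioo (fun t ht => ?_)
    have hin : (fun x => f x t) = Set.indicator (Set.Ioi t) (fun x => φ x * g t) := by
      funext x
      simp only [hf, Set.indicator_apply, Set.mem_Ioi]
    rw [hin, hμ, integral_indicator measurableSet_Ioi,
      Measure.restrict_restrict measurableSet_Ioi]
    have hint : Set.Ioi t ∩ Set.Ioo (0:ℝ) 1 = Set.Ioo t 1 := by
      ext x
      simp only [Set.mem_inter_iff, Set.mem_Ioi, Set.mem_Ioo]
      constructor
      · rintro ⟨h1, _, h3⟩; exact ⟨h1, h3⟩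
      · rintro ⟨h1, h2⟩; exact ⟨h1, ht.1.trans h1, h2⟩
    rw [hint, integral_mul_const]
    have hsp := split_int hφIcc ht.1.le ht.2.le le_rfl
    have hval : (∫ x in Set.Ioo t 1, φ x)
        = (∫ u in Set.Ioo (0:ℝ) 1, φ u) - ∫ u in Set.Ioo (0:ℝ) t, φ u := by
      linarith
    rw [hval, mul_comm]
  rw [← hR, ← hswap, hL]

theorem kinetic_energies_tendsto_atTop (φ g : ℕ → ℝ → ℝ)
    (hH : ∀ j, 1 ≤ j → InH10 (φ j) (g j))
    (horth : ∀ i, 1 ≤ i → ∀ j, 1 ≤ j →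
      (∫ x in Set.Ioo (0:ℝ) 1, φ i x * φ j x) = if i = j then 1 else 0) :
    Filter.Tendsto (fun j : ℕ => ∫ x in Set.Ioo (0:ℝ) 1, (g j x) ^ 2)
      Filter.atTop Filter.atTop := by
  rw [Filter.tendsto_atTop]
  intro M
  set M' := max M 1 with hM'def
  have hM'1 : (1:ℝ) ≤ M' := le_max_right _ _
  have hM'0 : (0:ℝ) < M' := by linarith
  have hsqM : 0 < Real.sqrt M' := Real.sqrt_pos.2 hM'0
  set δ := 1 / (2 * Real.sqrt M') with hδdef
  have hδ : 0 < δ := by positivity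
  filter_upwards [uniform_small φ g hH horth hδ, Filter.eventually_ge_atTop 1] with j hjU hj1
  set E := ∫ x in Set.Ioo (0:ℝ) 1, g j x ^ 2 with hEdef
  have hg2I : IntegrableOn (fun t => g j t ^ 2) (Set.Ioo (0:ℝ) 1) := (hH j hj1).2.1
  have hgI : IntegrableOn (g j) (Set.Ioo (0:ℝ) 1) := (hH j hj1).g_int
  have hE0 : (0:ℝ) ≤ E := integral_nonneg fun t => sq_nonneg _
  have hnorm := norm_one φ horth hj1
  have hfub := fubini_identity (hH j hj1) hnorm
  set w : ℝ → ℝ := fun t => (∫ u in Set.Ioo (0:ℝ) 1, φ j u) - ∫ u in Set.Ioo (0:ℝ) t, φ j u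
    with hwdef
  have hwb : ∀ t ∈ Set.Ioo (0:ℝ) 1, |w t| ≤ 2 * δ := by
    intro t ht
    have h1 : |∫ u in Set.Ioo (0:ℝ) 1, φ j u| ≤ δ := hjU 1 ⟨zero_le_one, le_refl 1⟩
    have h2 : |∫ u in Set.Ioo (0:ℝ) t, φ j u| ≤ δ := hjU t ⟨ht.1.le, ht.2.le⟩
    calc |w t| ≤ |∫ u in Set.Ioo (0:ℝ) 1, φ j u| + |∫ u in Set.Ioo (0:ℝ) t, φ j u| :=
          abs_sub _ _
      _ ≤ 2 * δ := by linarith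
  have hbound : (1:ℝ) ≤ ∫ t in Set.Ioo (0:ℝ) 1, |g j t| * (2 * δ) := by
    calc (1:ℝ) = ∫ t in Set.Ioo (0:ℝ) 1, g j t * w t := hfub
      _ ≤ |∫ t in Set.Ioo (0:ℝ) 1, g j t * w t| := le_abs_self _
      _ ≤ ∫ t in Set.Ioo (0:ℝ) 1, |g j t| * |w t| := by
          simpa [Real.norm_eq_abs, abs_mul] using norm_integral_le_integral_norm
            (μ := volume.restrict (Set.Ioo (0:ℝ) 1)) (fun t => g j t * w t)
      _ ≤ ∫ t in Set.Ioo (0:ℝ) 1, |g j t| * (2 * δ) := by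
          refine integral_mono_of_nonneg ?_ (by exact hgI.abs.mul_const (2 * δ)) ?_
          · filter_upwards with t using mul_nonneg (abs_nonneg _) (abs_nonneg _)
          · filter_upwards [ae_restrict_mem measurableSet_Ioo] with t ht
            exact mul_le_mul_of_nonneg_left (hwb t ht) (abs_nonneg _)
  have hgabs : (∫ t in Set.Ioo (0:ℝ) 1, |g j t|) ≤ Real.sqrt E := by
    have hcs := cs_integral measurableSet_Ioo (by simp) hgI hg2I
    rw [Real.volume_Ioo, ENNReal.toReal_ofReal (by norm_num : (0:ℝ) ≤ 1 - 0)] at hcs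
    have hnn : (0:ℝ) ≤ ∫ t in Set.Ioo (0:ℝ) 1, |g j t| := integral_nonneg fun t => abs_nonneg _
    rw [← Real.sqrt_sq hnn]
    apply Real.sqrt_le_sqrt
    calc (∫ t in Set.Ioo (0:ℝ) 1, |g j t|) ^ 2 ≤ (1 - 0) * E := hcs
      _ = E := by ring
  have h1 : (1:ℝ) ≤ Real.sqrt E * (2 * δ) := by
    calc (1:ℝ) ≤ ∫ t in Set.Ioo (0:ℝ) 1, |g j t| * (2 * δ) := hbound
      _ = (∫ t in Set.Ioo (0:ℝ) 1, |g j t|) * (2 * δ) := integral_mul_const _ _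
      _ ≤ Real.sqrt E * (2 * δ) := mul_le_mul_of_nonneg_right hgabs (by positivity)
  have h2δ : 2 * δ = 1 / Real.sqrt M' := by rw [hδdef]; ring
  have h2 : Real.sqrt M' ≤ Real.sqrt E := by
    rw [h2δ, mul_one_div] at h1
    exact (one_le_div hsqM).1 h1
  have h3 : M' ≤ E := by
    nlinarith [Real.sq_sqrt hE0, Real.sq_sqrt hM'0.le, Real.sqrt_nonneg M', h2, hsqM]
  exact le_trans (le_max_left M 1) h3
end

section
/- Let s ∈ (1, ∞), let ω ⊆ ℝ² be a measurable set, and let f : ω × ℝ² → [0, ∞) be measurable. Define the velocity average ρ_f(y) = ∫_{ℝ²} f(y,v) dv for y ∈ ω. Then there is a constant C depending only on s such that ‖ρ_f‖_{L^{(2s−1)/s}(ω)} ≤ C · ‖f‖_{L^s(ω×ℝ²)}^{s/(2s−1)} · ( ∬_{ω×ℝ²} |v|² f(y,v) dy dv )^{(s−1)/(2s−1)}, where the inequality is understood in the extended nonnegative reals (both sides may be infinite) and all norms and integrals are with respect to Lebesgue measure. -/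
open MeasureTheory
open scoped ENNReal

/-- The plane `ℝ²` with the Euclidean norm. -/
abbrev Plane := EuclideanSpace ℝ (Fin 2)

open Metric

/-- Optimization over the free radius parameter, in `ℝ≥0∞`. -/
lemma ennreal_opt {x a b : ℝ≥0∞} {γ : ℝ} (hγ : 0 < γ)
    (ha0 : a = 0 → x = 0) (hb0 : b = 0 → x = 0)
    (h : ∀ t : ℝ≥0∞, t ≠ 0 → t ≠ ∞ → x ≤ a * t ^ γ + t⁻¹ * b) :
    x ≤ 2 * a ^ (1/(1+γ)) * b ^ (γ/(1+γ)) := by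
  have hθ : 0 < 1/(1+γ) := by positivity
  have he : 0 < γ/(1+γ) := by positivity
  rcases eq_or_ne a 0 with rfl | ha
  · simp [ha0 rfl]
  rcases eq_or_ne b 0 with rfl | hb
  · simp [hb0 rfl]
  rcases eq_or_ne a ∞ with rfl | hatop
  · have hbe : b ^ (γ/(1+γ)) ≠ 0 := by
      simp only [ne_eq, ENNReal.rpow_eq_zero_iff, not_or, not_and, not_lt]
      exact ⟨fun h => absurd h hb, fun _ => he.le⟩
    rw [ENNReal.top_rpow_of_pos hθ, ENNReal.mul_top (by norm_num), ENNReal.top_mul hbe]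
    exact le_top
  rcases eq_or_ne b ∞ with rfl | hbtop
  · have hae : a ^ (1/(1+γ)) ≠ 0 := by
      simp only [ne_eq, ENNReal.rpow_eq_zero_iff, not_or, not_and, not_lt]
      exact ⟨fun h => absurd h ha, fun _ => hθ.le⟩
    rw [ENNReal.top_rpow_of_pos he, ENNReal.mul_top (mul_ne_zero (by norm_num) hae)]
    exact le_top
  -- main case
  have hba0 : b / a ≠ 0 := by simp [ENNReal.div_eq_zero_iff, hb, hatop]
  have hbatop : b / a ≠ ∞ := by simp [ENNReal.div_eq_top, hbtop, ha]
  set t : ℝ≥0∞ := (b / a) ^ (1/(1+γ)) with ht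
  have ht0 : t ≠ 0 := by simp [ht, ENNReal.rpow_eq_zero_iff, hba0, hbatop]
  have httop : t ≠ ∞ := by simp [ht, ENNReal.rpow_eq_top_iff, hba0, hbatop]
  have key := h t ht0 httop
  have h1γ : (1:ℝ) + γ ≠ 0 := by positivity
  have hsum : 1/(1+γ) + γ/(1+γ) = 1 := by field_simp
  have e1 : a * t ^ γ = a ^ (1/(1+γ)) * b ^ (γ/(1+γ)) := by
    have h1 : t ^ γ = b ^ (γ/(1+γ)) * (a ^ (γ/(1+γ)))⁻¹ := by
      rw [ht, ← ENNReal.rpow_mul, show 1/(1+γ) * γ = γ/(1+γ) by field_simp,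
        ENNReal.div_rpow_of_nonneg _ _ he.le, div_eq_mul_inv]
    have h2 : a * (a ^ (γ/(1+γ)))⁻¹ = a ^ (1/(1+γ)) := by
      rw [show (1:ℝ)/(1+γ) = 1 - γ/(1+γ) by linarith [hsum], ENNReal.rpow_sub _ _ ha hatop,
        ENNReal.rpow_one, div_eq_mul_inv, div_eq_mul_inv]
    rw [h1, mul_comm (b ^ (γ/(1+γ))), ← mul_assoc, h2]
  have e2 : t⁻¹ * b = a ^ (1/(1+γ)) * b ^ (γ/(1+γ)) := by
    have h1 : t⁻¹ = a ^ (1/(1+γ)) * (b ^ (1/(1+γ)))⁻¹ := by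
      rw [ht, ← ENNReal.inv_rpow, ENNReal.inv_div (Or.inl hatop) (Or.inl ha),
        ENNReal.div_rpow_of_nonneg _ _ hθ.le, div_eq_mul_inv]
    have h2 : (b ^ (1/(1+γ)))⁻¹ * b = b ^ (γ/(1+γ)) := by
      rw [show γ/(1+γ) = 1 - 1/(1+γ) by linarith [hsum], ENNReal.rpow_sub _ _ hb hbtop,
        ENNReal.rpow_one, div_eq_mul_inv, div_eq_mul_inv, mul_comm]
    rw [h1, mul_assoc, h2]
  calc x ≤ a * t ^ γ + t⁻¹ * b := key
    _ = 2 * a ^ (1/(1+γ)) * b ^ (γ/(1+γ)) := by rw [e1, e2, mul_assoc, two_mul]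

lemma split_bound {s : ℝ} (hs : 1 < s) (g : Plane → ℝ≥0∞) (hg : Measurable g)
    {r : ℝ} (hr : 0 < r) :
    ∫⁻ v, g v ≤
      (volume (ball (0:Plane) 1) ^ (1 - 1/s) * (∫⁻ v, g v ^ s) ^ (1/s))
        * ENNReal.ofReal (r^2) ^ (1 - 1/s)
      + (ENNReal.ofReal (r^2))⁻¹ * ∫⁻ v, ENNReal.ofReal (‖v‖^2) * g v := by
  have hs0 : 0 < s := lt_trans one_pos hs
  have hs1 : 0 < s - 1 := by linarith
  have hconj : s.HolderConjugate (s/(s-1)) := (Real.holderConjugate_iff_eq_conjExponent hs).2 rfl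
  have hq0 : 0 < s/(s-1) := by positivity
  have h1s : 0 < 1 - 1/s := by
    rw [sub_pos, div_lt_one hs0]; exact hs
  have hr2 : ENNReal.ofReal (r^2) ≠ 0 := by
    simp only [ne_eq, ENNReal.ofReal_eq_zero, not_le]; positivity
  have hball : ∫⁻ v in ball (0:Plane) r, g v
      ≤ (∫⁻ v, g v ^ s) ^ (1/s) * volume (ball (0:Plane) r) ^ (1 - 1/s) := by
    set ind : Plane → ℝ≥0∞ := (ball (0:Plane) r).indicator (fun _ => 1) with hind_def
    have h1 : ∫⁻ v in ball (0:Plane) r, g v = ∫⁻ v, (g * ind) v := by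
      rw [← lintegral_indicator measurableSet_ball]
      refine lintegral_congr fun v => ?_
      by_cases hv : v ∈ ball (0:Plane) r <;> simp [hind_def, Set.indicator_apply, hv]
    rw [h1]
    have hind : Measurable ind := measurable_const.indicator measurableSet_ball
    refine (ENNReal.lintegral_mul_le_Lp_mul_Lq volume hconj hg.aemeasurable
      hind.aemeasurable).trans (le_of_eq ?_)
    congr 1
    have h3 : ∀ v, ind v ^ (s/(s-1)) = ind v := fun v => by
      by_cases hv : v ∈ ball (0:Plane) r <;>
        simp [hind_def, Set.indicator_apply, hv, ENNReal.zero_rpow_of_pos hq0]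
    rw [lintegral_congr h3, hind_def, lintegral_indicator measurableSet_ball, setLIntegral_one]
    congr 1
    field_simp
  have hvol : volume (ball (0:Plane) r) ^ (1 - 1/s)
      = ENNReal.ofReal (r^2) ^ (1 - 1/s) * volume (ball (0:Plane) 1) ^ (1 - 1/s) := by
    rw [Measure.addHaar_ball_of_pos volume (0:Plane) hr,
      ENNReal.mul_rpow_of_nonneg _ _ h1s.le]
    congr 2
    rw [finrank_euclideanSpace_fin]
  have htail : ∫⁻ v in (ball (0:Plane) r)ᶜ, g v
      ≤ (ENNReal.ofReal (r^2))⁻¹ * ∫⁻ v, ENNReal.ofReal (‖v‖^2) * g v := by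
    have hmono : ∀ v ∈ (ball (0:Plane) r)ᶜ,
        g v ≤ (ENNReal.ofReal (r^2))⁻¹ * (ENNReal.ofReal (‖v‖^2) * g v) := by
      intro v hv
      have hrv : r ≤ ‖v‖ := by
        simpa [mem_ball, dist_zero_right, not_lt] using hv
      have h1 : (1:ℝ≥0∞) ≤ (ENNReal.ofReal (r^2))⁻¹ * ENNReal.ofReal (‖v‖^2) :=
        calc (1:ℝ≥0∞) = (ENNReal.ofReal (r^2))⁻¹ * ENNReal.ofReal (r^2) :=
              (ENNReal.inv_mul_cancel hr2 ENNReal.ofReal_ne_top).symm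
          _ ≤ _ := mul_le_mul_right
              (ENNReal.ofReal_le_ofReal (by nlinarith)) _
      calc g v = 1 * g v := (one_mul _).symm
        _ ≤ ((ENNReal.ofReal (r^2))⁻¹ * ENNReal.ofReal (‖v‖^2)) * g v :=
            mul_le_mul_left h1 _
        _ = (ENNReal.ofReal (r^2))⁻¹ * (ENNReal.ofReal (‖v‖^2) * g v) := mul_assoc _ _ _
    calc ∫⁻ v in (ball (0:Plane) r)ᶜ, g v
        ≤ ∫⁻ v in (ball (0:Plane) r)ᶜ,
            (ENNReal.ofReal (r^2))⁻¹ * (ENNReal.ofReal (‖v‖^2) * g v) :=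
          setLIntegral_mono' measurableSet_ball.compl hmono
      _ ≤ ∫⁻ v, (ENNReal.ofReal (r^2))⁻¹ * (ENNReal.ofReal (‖v‖^2) * g v) :=
          setLIntegral_le_lintegral _ _
      _ = _ := lintegral_const_mul' _ _ (by simp [ENNReal.inv_ne_top, hr2])
  calc ∫⁻ v, g v = (∫⁻ v in ball (0:Plane) r, g v) + ∫⁻ v in (ball (0:Plane) r)ᶜ, g v :=
      (lintegral_add_compl g measurableSet_ball).symm
    _ ≤ (∫⁻ v, g v ^ s) ^ (1/s) * volume (ball (0:Plane) r) ^ (1 - 1/s)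
        + (ENNReal.ofReal (r^2))⁻¹ * ∫⁻ v, ENNReal.ofReal (‖v‖^2) * g v :=
      add_le_add hball htail
    _ = _ := by rw [hvol]; ring

lemma pointwise_bound {s : ℝ} (hs : 1 < s) (g : Plane → ℝ≥0∞) (hg : Measurable g) :
    ∫⁻ v, g v ≤ (2 * (volume (ball (0:Plane) 1) ^ (1 - 1/s) + 1))
      * ((∫⁻ v, g v ^ s) ^ (1/s)) ^ (s/(2*s-1))
      * (∫⁻ v, ENNReal.ofReal (‖v‖^2) * g v) ^ ((s-1)/(2*s-1)) := by
  have hs0 : 0 < s := lt_trans one_pos hs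
  have h2s : 0 < 2*s - 1 := by linarith
  have hγ : 0 < 1 - 1/s := by rw [sub_pos, div_lt_one hs0]; exact hs
  set K : ℝ≥0∞ := volume (ball (0:Plane) 1) ^ (1 - 1/s) with hK
  have hK0 : K ≠ 0 := by
    rw [hK]
    simp only [ne_eq, ENNReal.rpow_eq_zero_iff, not_or, not_and, not_lt]
    exact ⟨fun h => absurd h (measure_ball_pos volume 0 one_pos).ne',
      fun h => absurd h (measure_ball_lt_top).ne⟩
  set A : ℝ≥0∞ := (∫⁻ v, g v ^ s) ^ (1/s) with hA
  set B : ℝ≥0∞ := ∫⁻ v, ENNReal.ofReal (‖v‖^2) * g v with hB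
  have hgs : Measurable fun v => g v ^ s := hg.pow_const s
  have ha0 : K * A = 0 → ∫⁻ v, g v = 0 := by
    intro h0
    rcases mul_eq_zero.1 h0 with h0 | h0
    · exact absurd h0 hK0
    have hint : ∫⁻ v, g v ^ s = 0 := by
      by_contra hne
      rcases (ENNReal.rpow_eq_zero_iff.1 h0) with ⟨h1, _⟩ | ⟨h1, h2⟩
      · exact hne h1
      · exact absurd h2 (by positivity : (0:ℝ) < 1/s).asymm
    have hae : ∀ᵐ v : Plane, g v ^ s = 0 := (lintegral_eq_zero_iff hgs).1 hint
    rw [lintegral_eq_zero_iff hg]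
    filter_upwards [hae] with v hv
    rcases ENNReal.rpow_eq_zero_iff.1 hv with ⟨h1, _⟩ | ⟨_, h2⟩
    · exact h1
    · exact absurd h2 hs0.asymm
  have hb0 : B = 0 → ∫⁻ v, g v = 0 := by
    intro h0
    have hmeas : Measurable fun v : Plane => ENNReal.ofReal (‖v‖^2) * g v :=
      (ENNReal.measurable_ofReal.comp (measurable_norm.pow_const 2)).mul hg
    have hae := (lintegral_eq_zero_iff hmeas).1 h0
    have hne : ∀ᵐ v : Plane, v ≠ 0 := by
      rw [ae_iff]
      simpa using measure_singleton (0 : Plane)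
    rw [lintegral_eq_zero_iff hg]
    filter_upwards [hae, hne] with v hv hv0
    rcases mul_eq_zero.1 hv with h1 | h1
    · rw [ENNReal.ofReal_eq_zero] at h1
      have hnv : ‖v‖ ≠ 0 := norm_ne_zero_iff.2 hv0
      have : 0 < ‖v‖^2 := by positivity
      linarith
    · exact h1
  have key : ∀ t : ℝ≥0∞, t ≠ 0 → t ≠ ∞ →
      ∫⁻ v, g v ≤ (K * A) * t ^ (1 - 1/s) + t⁻¹ * B := by
    intro t ht0 httop
    have hrt : 0 < Real.sqrt t.toReal := by
      apply Real.sqrt_pos.2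
      exact ENNReal.toReal_pos ht0 httop
    have hsq : ENNReal.ofReal (Real.sqrt t.toReal ^ 2) = t := by
      rw [Real.sq_sqrt ENNReal.toReal_nonneg, ENNReal.ofReal_toReal httop]
    have := split_bound hs g hg hrt
    rwa [hsq] at this
  have main := ennreal_opt hγ ha0 hb0 key
  have hden : (0:ℝ) < 1 + (1 - 1/s) := by linarith
  have hu : (1/s)*s = 1 := by field_simp
  have hexp1 : 1/(1 + (1 - 1/s)) = s/(2*s-1) := by
    rw [div_eq_div_iff hden.ne' h2s.ne']
    linear_combination hu
  have hexp2 : (1 - 1/s)/(1 + (1 - 1/s)) = (s-1)/(2*s-1) := by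
    rw [div_eq_div_iff hden.ne' h2s.ne']
    linear_combination -hu
  rw [hexp1, hexp2] at main
  refine main.trans ?_
  have hKA : (K * A) ^ (s/(2*s-1)) ≤ (K + 1) * A ^ (s/(2*s-1)) := by
    rw [ENNReal.mul_rpow_of_nonneg _ _ (by positivity : (0:ℝ) ≤ s/(2*s-1))]
    gcongr
    rcases le_total K 1 with hK1 | hK1
    · exact (ENNReal.rpow_le_one hK1 (by positivity)).trans le_add_self
    · have hle : s/(2*s-1) ≤ 1 := by
        rw [div_le_one h2s]; linarith
      have h1 := ENNReal.rpow_le_rpow_of_exponent_le hK1 hle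
      rw [ENNReal.rpow_one] at h1
      exact h1.trans le_self_add
  calc 2 * (K * A) ^ (s/(2*s-1)) * B ^ ((s-1)/(2*s-1))
      ≤ 2 * ((K + 1) * A ^ (s/(2*s-1))) * B ^ ((s-1)/(2*s-1)) := by gcongr
    _ = 2 * (K + 1) * A ^ (s/(2*s-1)) * B ^ ((s-1)/(2*s-1)) := by ring

theorem kinetic_interpolation_inequality (s : ℝ) (hs : 1 < s) :
    ∃ C : ℝ≥0∞, C ≠ ⊤ ∧
      ∀ (ω : Set Plane), MeasurableSet ω →
        ∀ (f : Plane × Plane → ℝ), Measurable f → (∀ p, 0 ≤ f p) →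
          (∫⁻ y in ω, (∫⁻ v, ENNReal.ofReal (f (y, v))) ^ ((2*s - 1)/s)) ^ (s/(2*s - 1))
            ≤ C * ((∫⁻ p in ω ×ˢ (Set.univ : Set Plane),
                      ENNReal.ofReal (f p) ^ s) ^ (1/s)) ^ (s/(2*s - 1))
                * (∫⁻ p in ω ×ˢ (Set.univ : Set Plane),
                      ENNReal.ofReal (‖p.2‖ ^ 2 * f p)) ^ ((s - 1)/(2*s - 1)) := by
  have hs0 : 0 < s := lt_trans one_pos hs
  have hs1 : 0 < s - 1 := by linarith
  have h2s : 0 < 2*s - 1 := by linarith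
  have hγ : 0 < 1 - 1/s := by rw [sub_pos, div_lt_one hs0]; exact hs
  have hp0 : (0:ℝ) ≤ (2*s - 1)/s := by positivity
  have hσ : (0:ℝ) ≤ s/(2*s - 1) := by positivity
  set c : ℝ≥0∞ := 2 * (volume (ball (0:Plane) 1) ^ (1 - 1/s) + 1) with hc
  have hcne : c ≠ ⊤ := by
    rw [hc]
    refine ENNReal.mul_ne_top (by norm_num) (ENNReal.add_ne_top.2 ⟨?_, by norm_num⟩)
    exact ENNReal.rpow_ne_top_of_nonneg hγ.le measure_ball_lt_top.ne
  refine ⟨c, hcne, ?_⟩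
  intro ω hω f hf hf0
  have hgmeas : Measurable fun p : Plane × Plane => ENNReal.ofReal (f p) :=
    ENNReal.measurable_ofReal.comp hf
  set A : Plane → ℝ≥0∞ := fun y => ∫⁻ v, ENNReal.ofReal (f (y, v)) ^ s with hA
  set B : Plane → ℝ≥0∞ := fun y => ∫⁻ v, ENNReal.ofReal (‖v‖^2) * ENNReal.ofReal (f (y, v))
    with hB
  have hAmeas : Measurable A := Measurable.lintegral_prod_right (hgmeas.pow_const s)
  have hBmeas : Measurable B := Measurable.lintegral_prod_right
    (((measurable_snd.norm.pow_const 2).ennreal_ofReal).mul hgmeas)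
  -- pointwise bound raised to power (2s-1)/s
  have step1 : ∀ y : Plane, (∫⁻ v, ENNReal.ofReal (f (y, v))) ^ ((2*s - 1)/s)
      ≤ c ^ ((2*s - 1)/s) * ((A y) ^ (1/s) * (B y) ^ ((s-1)/s)) := by
    intro y
    have h1 := pointwise_bound hs (fun v => ENNReal.ofReal (f (y, v)))
      (hgmeas.comp measurable_prodMk_left)
    have h2 := ENNReal.rpow_le_rpow h1 hp0
    refine h2.trans (le_of_eq ?_)
    rw [ENNReal.mul_rpow_of_nonneg _ _ hp0, ENNReal.mul_rpow_of_nonneg _ _ hp0,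
      ← ENNReal.rpow_mul ((A y) ^ (1/s)), ← ENNReal.rpow_mul (B y),
      show s/(2*s-1) * ((2*s-1)/s) = 1 by
        rw [div_mul_div_comm, mul_comm, div_self (by positivity)],
      show (s-1)/(2*s-1) * ((2*s-1)/s) = (s-1)/s by
        rw [div_mul_div_comm, mul_comm (s-1) (2*s-1), mul_div_mul_left _ _ h2s.ne'],
      ENNReal.rpow_one, mul_assoc]
  have step2 : ∫⁻ y in ω, (∫⁻ v, ENNReal.ofReal (f (y, v))) ^ ((2*s - 1)/s)
      ≤ c ^ ((2*s - 1)/s) * ∫⁻ y in ω, (A y) ^ (1/s) * (B y) ^ ((s-1)/s) := by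
    rw [← lintegral_const_mul' _ _ (ENNReal.rpow_ne_top_of_nonneg hp0 hcne)]
    exact lintegral_mono step1
  have hconj : s.HolderConjugate (s/(s-1)) := (Real.holderConjugate_iff_eq_conjExponent hs).2 rfl
  have step3 : ∫⁻ y in ω, (A y) ^ (1/s) * (B y) ^ ((s-1)/s)
      ≤ (∫⁻ y in ω, A y) ^ (1/s) * (∫⁻ y in ω, B y) ^ ((s-1)/s) := by
    have h := ENNReal.lintegral_mul_le_Lp_mul_Lq (volume.restrict ω) hconj
      ((hAmeas.pow_const (1/s)).aemeasurable) ((hBmeas.pow_const ((s-1)/s)).aemeasurable)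
    simp only [Pi.mul_apply] at h
    have e1 : ∀ y, ((A y) ^ (1/s)) ^ s = A y := fun y => by
      rw [← ENNReal.rpow_mul, one_div_mul_cancel hs0.ne', ENNReal.rpow_one]
    have e2 : ∀ y, ((B y) ^ ((s-1)/s)) ^ (s/(s-1)) = B y := fun y => by
      rw [← ENNReal.rpow_mul,
        show (s-1)/s * (s/(s-1)) = 1 by
          rw [div_mul_div_comm, mul_comm, div_self (by positivity)],
        ENNReal.rpow_one]
    simp only [e1, e2] at h
    rwa [one_div_div] at h
  -- Fubini
  have hrestrict : (volume : Measure (Plane × Plane)).restrict (ω ×ˢ (Set.univ : Set Plane))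
      = (volume.restrict ω).prod volume := by
    rw [Measure.volume_eq_prod, ← Measure.restrict_prod_eq_prod_univ]
  have fub1 : ∫⁻ p in ω ×ˢ (Set.univ : Set Plane), ENNReal.ofReal (f p) ^ s
      = ∫⁻ y in ω, A y := by
    rw [hrestrict, lintegral_prod _ ((hgmeas.pow_const s).aemeasurable)]
  have fub2 : ∫⁻ p in ω ×ˢ (Set.univ : Set Plane), ENNReal.ofReal (‖p.2‖ ^ 2 * f p)
      = ∫⁻ y in ω, B y := by
    have hmm : Measurable fun p : Plane × Plane =>
        ENNReal.ofReal (‖p.2‖^2) * ENNReal.ofReal (f p) :=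
      ((measurable_snd.norm.pow_const 2).ennreal_ofReal).mul hgmeas
    calc ∫⁻ p in ω ×ˢ (Set.univ : Set Plane), ENNReal.ofReal (‖p.2‖ ^ 2 * f p)
        = ∫⁻ p in ω ×ˢ (Set.univ : Set Plane),
            ENNReal.ofReal (‖p.2‖^2) * ENNReal.ofReal (f p) := by
          refine lintegral_congr fun p => ?_
          exact ENNReal.ofReal_mul (by positivity)
      _ = ∫⁻ y in ω, B y := by
          rw [hrestrict, lintegral_prod _ hmm.aemeasurable]
  calc (∫⁻ y in ω, (∫⁻ v, ENNReal.ofReal (f (y, v))) ^ ((2*s - 1)/s)) ^ (s/(2*s - 1))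
      ≤ (c ^ ((2*s - 1)/s)
          * ((∫⁻ y in ω, A y) ^ (1/s) * (∫⁻ y in ω, B y) ^ ((s-1)/s))) ^ (s/(2*s - 1)) := by
        refine ENNReal.rpow_le_rpow (step2.trans ?_) hσ
        exact mul_le_mul_right step3 _
    _ = c * ((∫⁻ y in ω, A y) ^ (1/s)) ^ (s/(2*s - 1))
          * (∫⁻ y in ω, B y) ^ ((s - 1)/(2*s - 1)) := by
        rw [ENNReal.mul_rpow_of_nonneg _ _ hσ, ENNReal.mul_rpow_of_nonneg _ _ hσ,
          ← ENNReal.rpow_mul c,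
          show (2*s-1)/s * (s/(2*s-1)) = 1 by
            rw [div_mul_div_comm, mul_comm, div_self (by positivity)],
          ← ENNReal.rpow_mul (∫⁻ y in ω, B y),
          show (s-1)/s * (s/(2*s-1)) = (s-1)/(2*s-1) by
            rw [div_mul_div_comm, mul_comm s (2*s-1), mul_div_mul_right _ _ hs0.ne'],
          ENNReal.rpow_one, mul_assoc, hc]
        ring
    _ = c * ((∫⁻ p in ω ×ˢ (Set.univ : Set Plane), ENNReal.ofReal (f p) ^ s) ^ (1/s))
            ^ (s/(2*s - 1))
          * (∫⁻ p in ω ×ˢ (Set.univ : Set Plane),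
              ENNReal.ofReal (‖p.2‖ ^ 2 * f p)) ^ ((s - 1)/(2*s - 1)) := by
        rw [fub1, fub2]
end

section
/- Let p ∈ [2, ∞) and let φ : ℝ → ℝ satisfy: there is a measurable g : ℝ → ℝ with ∫₀¹ g(t)² dt < ∞ and φ(x) = ∫₀^x g(t) dt for all x ∈ [0,1]. Then ‖φ‖_{L^p(0,1)} ≤ 2^{1/2 − 1/p} · ‖g‖_{L²(0,1)}^{1/2 − 1/p} · ‖φ‖_{L²(0,1)}^{1/2 + 1/p}. -/
open MeasureTheory Set

lemma sq_setIntegral_eq (g : ℝ → ℝ) (hg : Measurable g) (x : ℝ)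
    (hint : IntegrableOn g (Ioo 0 x)) :
    (∫ t in Ioo 0 x, g t) ^ 2
      = 2 * ∫ t in Ioo 0 x, g t * ∫ s in Ioo 0 t, g s := by
  set T := Ioo (0:ℝ) x with hT
  have hTm : MeasurableSet T := measurableSet_Ioo
  set f : ℝ × ℝ → ℝ := fun p => g p.1 * g p.2 with hf
  set S : Set (ℝ × ℝ) := {p | p.2 < p.1} with hS
  set S' : Set (ℝ × ℝ) := {p | p.1 < p.2} with hS'
  have hSm : MeasurableSet S := measurableSet_lt measurable_snd measurable_fst
  have hS'm : MeasurableSet S' := measurableSet_lt measurable_fst measurable_snd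
  have hvol : (volume : Measure (ℝ × ℝ)) = (volume : Measure ℝ).prod volume :=
    (Measure.volume_eq_prod ℝ ℝ)
  have hprod : IntegrableOn f (T ×ˢ T) ((volume : Measure ℝ).prod volume) := by
    rw [IntegrableOn, ← Measure.prod_restrict]
    exact hint.mul_prod hint
  -- total integral
  have htot : ∫ p in T ×ˢ T, f p ∂((volume : Measure ℝ).prod volume)
      = (∫ t in T, g t) ^ 2 := by
    rw [hf, setIntegral_prod_mul, sq]
  -- diagonal is null
  have hdiag : ((volume : Measure ℝ).prod volume) {p : ℝ × ℝ | p.1 = p.2} = 0 := by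
    have hm : MeasurableSet {p : ℝ × ℝ | p.1 = p.2} :=
      measurableSet_eq_fun measurable_fst measurable_snd
    rw [Measure.prod_apply hm]
    have : ∀ a : ℝ, (volume (Prod.mk a ⁻¹' {p : ℝ × ℝ | p.1 = p.2})) = 0 := by
      intro a
      have : Prod.mk a ⁻¹' {p : ℝ × ℝ | p.1 = p.2} = {a} := by
        ext y; simp [eq_comm]
      rw [this]; exact measure_singleton a
    simp [this]
  -- split into S and S'
  have hsplit : ∫ p in T ×ˢ T, f p ∂((volume : Measure ℝ).prod volume)
      = (∫ p in (T ×ˢ T) ∩ S, f p ∂((volume : Measure ℝ).prod volume))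
        + ∫ p in (T ×ˢ T) ∩ S', f p ∂((volume : Measure ℝ).prod volume) := by
    have hae : (T ×ˢ T : Set (ℝ × ℝ)) =ᵐ[(volume : Measure ℝ).prod volume]
        ((((T ×ˢ T) ∩ S) ∪ ((T ×ˢ T) ∩ S')) : Set (ℝ × ℝ)) := by
      refine (MeasureTheory.measure_symmDiff_eq_zero_iff).1 ?_
      refine measure_mono_null ?_ hdiag
      intro p hp
      rw [Set.mem_symmDiff] at hp
      rcases hp with ⟨hp1, hp2⟩ | ⟨hp1, hp2⟩
      · have h1 : p ∉ S := fun h => hp2 (Or.inl ⟨hp1, h⟩)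
        have h2 : p ∉ S' := fun h => hp2 (Or.inr ⟨hp1, h⟩)
        simp only [hS, hS', Set.mem_setOf_eq, not_lt] at h1 h2
        exact le_antisymm h1 h2
      · exact absurd (by rcases hp1 with ⟨h, _⟩ | ⟨h, _⟩ <;> exact h) hp2
    have hdisj : Disjoint ((T ×ˢ T) ∩ S) ((T ×ˢ T) ∩ S') := by
      refine Set.disjoint_left.2 ?_
      rintro p ⟨_, h1⟩ ⟨_, h2⟩
      exact lt_asymm (show p.2 < p.1 from h1) (show p.1 < p.2 from h2)
    rw [setIntegral_congr_set hae,
      setIntegral_union hdisj ((hTm.prod hTm).inter hS'm)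
        (hprod.mono_set Set.inter_subset_left) (hprod.mono_set Set.inter_subset_left)]
  -- swap symmetry
  have hswapind : ∫ p in (T ×ˢ T) ∩ S', f p ∂((volume : Measure ℝ).prod volume)
      = ∫ p in (T ×ˢ T) ∩ S, f p ∂((volume : Measure ℝ).prod volume) := by
    have hmp : MeasurePreserving Prod.swap ((volume : Measure ℝ).prod volume)
        ((volume : Measure ℝ).prod volume) := Measure.measurePreserving_swap
    have hemb : MeasurableEmbedding (Prod.swap : ℝ × ℝ → ℝ × ℝ) :=
      MeasurableEquiv.prodComm.measurableEmbedding
    have h := hmp.setIntegral_preimage_emb hemb f ((T ×ˢ T) ∩ S)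
    have hpre : Prod.swap ⁻¹' ((T ×ˢ T) ∩ S) = (T ×ˢ T) ∩ S' := by
      ext p
      simp only [Set.mem_preimage, Set.mem_inter_iff, Set.mem_prod, Prod.fst_swap,
        Prod.snd_swap, hS, hS', Set.mem_setOf_eq]
      tauto
    rw [hpre] at h
    rw [← h]
    refine setIntegral_congr_fun ((hTm.prod hTm).inter hS'm) (fun p _ => ?_)
    simp [hf, mul_comm]
  -- Fubini on the lower triangle
  have hkey : ∫ p in (T ×ˢ T) ∩ S, f p ∂((volume : Measure ℝ).prod volume)
      = ∫ t in T, g t * ∫ s in Ioo 0 t, g s := by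
    have hind : ∫ p in (T ×ˢ T) ∩ S, f p ∂((volume : Measure ℝ).prod volume)
        = ∫ p in T ×ˢ T, S.indicator f p ∂((volume : Measure ℝ).prod volume) := by
      rw [integral_indicator hSm, Measure.restrict_restrict hSm, Set.inter_comm]
    rw [hind, setIntegral_prod _ (hprod.indicator hSm)]
    refine setIntegral_congr_fun hTm (fun t ht => ?_)
    have h1 : ∀ s : ℝ, S.indicator f (t, s) = (Iio t).indicator (fun s => g t * g s) s := by
      intro s
      by_cases h : s < t
      · rw [Set.indicator_of_mem (show (t,s) ∈ S from h) f,
          Set.indicator_of_mem (Set.mem_Iio.2 h)]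
      · rw [Set.indicator_of_notMem (show (t,s) ∉ S from h) f,
          Set.indicator_of_notMem (by simpa using h)]
    simp only [h1]
    rw [integral_indicator measurableSet_Iio, Measure.restrict_restrict measurableSet_Iio]
    have h2 : Iio t ∩ T = Ioo 0 t := by
      rw [hT, Set.inter_comm, Set.Ioo_inter_Iio, min_eq_right ht.2.le]
    rw [h2, integral_const_mul]
  have hfin : (∫ t in T, g t) ^ 2
      = 2 * ∫ p in (T ×ˢ T) ∩ S, f p ∂((volume : Measure ℝ).prod volume) := by
    rw [← htot, hsplit, hswapind]; ring
  rw [hfin, hkey]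

theorem gagliardo_nirenberg_1d (p : ℝ) (hp : 2 ≤ p) (φ g : ℝ → ℝ)
    (hg : Measurable g)
    (hgint : IntegrableOn (fun t => g t ^ 2) (Set.Ioo 0 1))
    (hφ : ∀ x ∈ Set.Icc (0:ℝ) 1, φ x = ∫ t in (0:ℝ)..x, g t) :
    eLpNorm φ (ENNReal.ofReal p) (volume.restrict (Set.Ioo (0:ℝ) 1))
      ≤ ENNReal.ofReal (2 ^ ((1:ℝ)/2 - 1/p))
          * eLpNorm g 2 (volume.restrict (Set.Ioo (0:ℝ) 1)) ^ ((1:ℝ)/2 - 1/p)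
          * eLpNorm φ 2 (volume.restrict (Set.Ioo (0:ℝ) 1)) ^ ((1:ℝ)/2 + 1/p) := by
  have hp0 : (0:ℝ) < p := lt_of_lt_of_le two_pos hp
  set μ := volume.restrict (Set.Ioo (0:ℝ) 1) with hμdef
  have hfinμ : IsFiniteMeasure μ := by
    constructor
    rw [hμdef, Measure.restrict_apply MeasurableSet.univ, Set.univ_inter, Real.volume_Ioo]
    simp
  have hgaes : AEStronglyMeasurable g μ := hg.aestronglyMeasurable
  have hgL2 : MemLp g 2 μ := (memLp_two_iff_integrable_sq hgaes).2 hgint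
  have hg1 : IntegrableOn g (Set.Ioo 0 1) := hgL2.integrable (by norm_num)
  -- φ is continuous on [0,1]
  have hprim : ContinuousOn (fun x => ∫ t in (0:ℝ)..x, g t) (Set.Icc 0 1) := by
    have h : IntegrableOn g (Set.uIcc (0:ℝ) 1) := by
      rw [Set.uIcc_of_le (zero_le_one : (0:ℝ) ≤ 1), integrableOn_Icc_iff_integrableOn_Ioo]
      exact hg1
    simpa [Set.uIcc_of_le (zero_le_one : (0:ℝ) ≤ 1)] using
      intervalIntegral.continuousOn_primitive_interval h
  have hφcont : ContinuousOn φ (Set.Icc 0 1) := hprim.congr hφ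
  have hφmeas : AEStronglyMeasurable φ μ :=
    (hφcont.mono Set.Ioo_subset_Icc_self).aestronglyMeasurable measurableSet_Ioo
  have hφ2int : IntegrableOn (fun t => φ t ^ 2) (Set.Ioo 0 1) := by
    have h : ContinuousOn (fun t => φ t ^ 2) (Set.Icc 0 1) := hφcont.pow 2
    exact h.integrableOn_Icc.mono_set Set.Ioo_subset_Icc_self
  have hφL2 : MemLp φ 2 μ := (memLp_two_iff_integrable_sq hφmeas).2 hφ2int
  set a := ∫ t in Set.Ioo (0:ℝ) 1, g t ^ 2 with hadef
  set b := ∫ t in Set.Ioo (0:ℝ) 1, φ t ^ 2 with hbdef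
  have ha0 : 0 ≤ a := setIntegral_nonneg measurableSet_Ioo (fun t _ => sq_nonneg _)
  have hb0 : 0 ≤ b := setIntegral_nonneg measurableSet_Ioo (fun t _ => sq_nonneg _)
  -- integrability of |g| * |φ|
  have habsint : IntegrableOn (fun t => |g t| * |φ t|) (Set.Ioo (0:ℝ) 1) := by
    refine Integrable.mono' ((hgint.add hφ2int).const_mul (1/2 : ℝ))
      (hgaes.norm.mul hφmeas.norm) ?_
    filter_upwards with t
    have h2 : 2 * |g t| * |φ t| ≤ |g t| ^ 2 + |φ t| ^ 2 := two_mul_le_add_sq _ _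
    have h3 : |g t| * |φ t| ≤ (g t ^ 2 + φ t ^ 2) / 2 := by
      rw [← sq_abs (g t), ← sq_abs (φ t)]; linarith
    have h4 : ‖|g t| * |φ t|‖ = |g t| * |φ t| := by
      rw [Real.norm_eq_abs, abs_of_nonneg (mul_nonneg (abs_nonneg _) (abs_nonneg _))]
    rw [h4]
    calc |g t| * |φ t| ≤ (g t ^ 2 + φ t ^ 2) / 2 := h3
      _ = 1/2 * (g t ^ 2 + φ t ^ 2) := by ring
  -- Hölder (Cauchy–Schwarz)
  have holder : ∫ t in Set.Ioo (0:ℝ) 1, |g t| * |φ t|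
      ≤ a ^ ((1:ℝ)/2) * b ^ ((1:ℝ)/2) := by
    have hpq : Real.HolderConjugate 2 2 := Real.HolderConjugate.two_two
    have h2 : ENNReal.ofReal (2:ℝ) = 2 := by norm_num
    have h := integral_mul_le_Lp_mul_Lq_of_nonneg hpq
      (μ := μ) (f := fun t => |g t|) (g := fun t => |φ t|)
      (Filter.Eventually.of_forall fun t => abs_nonneg (g t))
      (Filter.Eventually.of_forall fun t => abs_nonneg (φ t))
      (by rw [h2]; exact hgL2.abs) (by rw [h2]; exact hφL2.abs)
    have hrw : ∀ f : ℝ → ℝ, (fun t => |f t| ^ (2:ℝ)) = fun t => f t ^ 2 := by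
      intro f; funext t
      rw [show (2:ℝ) = ((2:ℕ):ℝ) by norm_num, Real.rpow_natCast, sq_abs]
    simp only [hrw] at h
    exact h
  -- the sup bound M
  set M := (2:ℝ) ^ ((1:ℝ)/2) * a ^ ((1:ℝ)/4) * b ^ ((1:ℝ)/4) with hMdef
  have hM0 : 0 ≤ M := by
    have := Real.rpow_nonneg ha0 ((1:ℝ)/4)
    have := Real.rpow_nonneg hb0 ((1:ℝ)/4)
    have : (0:ℝ) ≤ (2:ℝ) ^ ((1:ℝ)/2) := Real.rpow_nonneg (by norm_num) _
    positivity
  have hMsq : M ^ 2 = 2 * (a ^ ((1:ℝ)/2) * b ^ ((1:ℝ)/2)) := by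
    have h4 : ∀ c : ℝ, 0 ≤ c → (c ^ ((1:ℝ)/4)) ^ 2 = c ^ ((1:ℝ)/2) := by
      intro c hc
      rw [← Real.rpow_natCast (c ^ ((1:ℝ)/4)) 2, ← Real.rpow_mul hc]
      norm_num
    have h2 : ((2:ℝ) ^ ((1:ℝ)/2)) ^ 2 = 2 := by
      rw [← Real.rpow_natCast ((2:ℝ) ^ ((1:ℝ)/2)) 2, ← Real.rpow_mul (by norm_num : (0:ℝ) ≤ 2)]
      norm_num
    rw [hMdef, mul_pow, mul_pow, h4 a ha0, h4 b hb0, h2]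
    ring
  -- pointwise bound
  have hbound : ∀ x ∈ Set.Icc (0:ℝ) 1, |φ x| ≤ M := by
    intro x hx
    have hgx : IntegrableOn g (Set.Ioo 0 x) :=
      hg1.mono_set (Set.Ioo_subset_Ioo le_rfl hx.2)
    have hidentity : φ x ^ 2 = 2 * ∫ t in Set.Ioo 0 x, g t * φ t := by
      have h1 : φ x = ∫ t in Set.Ioo 0 x, g t := by
        rw [hφ x hx, intervalIntegral.integral_of_le hx.1,
          MeasureTheory.integral_Ioc_eq_integral_Ioo]
      rw [h1, sq_setIntegral_eq g hg x hgx]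
      congr 1
      refine setIntegral_congr_fun measurableSet_Ioo (fun t ht => ?_)
      have htx : t ∈ Set.Icc (0:ℝ) 1 := ⟨ht.1.le, le_trans ht.2.le hx.2⟩
      rw [hφ t htx, intervalIntegral.integral_of_le ht.1.le,
        MeasureTheory.integral_Ioc_eq_integral_Ioo]
    have hb1 : ∫ t in Set.Ioo 0 x, g t * φ t ≤ ∫ t in Set.Ioo (0:ℝ) 1, |g t| * |φ t| := by
      have hφaes' : AEStronglyMeasurable φ (volume.restrict (Set.Ioo 0 x)) :=
        (hφcont.mono (Set.Subset.trans Set.Ioo_subset_Icc_self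
          (Set.Icc_subset_Icc le_rfl hx.2))).aestronglyMeasurable measurableSet_Ioo
      have hgxφ : IntegrableOn (fun t => g t * φ t) (Set.Ioo 0 x) := by
        refine Integrable.mono' (habsint.mono_set (Set.Ioo_subset_Ioo le_rfl hx.2))
          (hg.aestronglyMeasurable.mul hφaes') ?_
        filter_upwards with t
        rw [Real.norm_eq_abs, abs_mul]
      calc ∫ t in Set.Ioo 0 x, g t * φ t
          ≤ ∫ t in Set.Ioo 0 x, |g t| * |φ t| := by
            refine integral_mono hgxφ (habsint.mono_set (Set.Ioo_subset_Ioo le_rfl hx.2)) ?_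
            intro t
            show g t * φ t ≤ |g t| * |φ t|
            rw [← abs_mul]
            exact le_abs_self _
        _ ≤ ∫ t in Set.Ioo (0:ℝ) 1, |g t| * |φ t| := by
            refine setIntegral_mono_set habsint ?_ ?_
            · filter_upwards with t using mul_nonneg (abs_nonneg _) (abs_nonneg _)
            · exact HasSubset.Subset.eventuallyLE (Set.Ioo_subset_Ioo le_rfl hx.2)
    have h3 : φ x ^ 2 ≤ M ^ 2 := by
      rw [hMsq, hidentity]
      have := mul_le_mul_of_nonneg_left (le_trans hb1 holder) (by norm_num : (0:ℝ) ≤ 2)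
      linarith
    calc |φ x| = Real.sqrt (φ x ^ 2) := (Real.sqrt_sq_eq_abs _).symm
      _ ≤ Real.sqrt (M ^ 2) := Real.sqrt_le_sqrt h3
      _ = M := by rw [Real.sqrt_sq hM0]
  -- integral of |φ|^p
  have hpne : p ≠ 0 := hp0.ne'
  have hφp_cont : ContinuousOn (fun t => ‖φ t‖ ^ p) (Set.Icc 0 1) :=
    hφcont.norm.rpow_const (fun t _ => Or.inr hp0.le)
  have hφpint : IntegrableOn (fun t => ‖φ t‖ ^ p) (Set.Ioo 0 1) :=
    hφp_cont.integrableOn_Icc.mono_set Set.Ioo_subset_Icc_self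
  have hIp : ∫ t in Set.Ioo (0:ℝ) 1, ‖φ t‖ ^ p ≤ M ^ (p - 2) * b := by
    have hle : ∀ t ∈ Set.Ioo (0:ℝ) 1, ‖φ t‖ ^ p ≤ M ^ (p - 2) * φ t ^ 2 := by
      intro t ht
      have habs : |φ t| ≤ M := hbound t ⟨ht.1.le, ht.2.le⟩
      have h0 : (0:ℝ) ≤ |φ t| := abs_nonneg _
      calc ‖φ t‖ ^ p = |φ t| ^ ((p - 2) + 2) := by rw [Real.norm_eq_abs]; norm_num
        _ = |φ t| ^ (p - 2) * |φ t| ^ (2:ℝ) :=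
            Real.rpow_add_of_nonneg h0 (by linarith) (by norm_num)
        _ ≤ M ^ (p - 2) * |φ t| ^ (2:ℝ) := by
            have h1 := Real.rpow_le_rpow h0 habs (by linarith : (0:ℝ) ≤ p - 2)
            have h2 : (0:ℝ) ≤ |φ t| ^ (2:ℝ) := Real.rpow_nonneg h0 _
            exact mul_le_mul_of_nonneg_right h1 h2
        _ = M ^ (p - 2) * φ t ^ 2 := by
            rw [show (2:ℝ) = ((2:ℕ):ℝ) by norm_num, Real.rpow_natCast, sq_abs]
    calc ∫ t in Set.Ioo (0:ℝ) 1, ‖φ t‖ ^ p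
        ≤ ∫ t in Set.Ioo (0:ℝ) 1, M ^ (p - 2) * φ t ^ 2 :=
          setIntegral_mono_on hφpint (hφ2int.const_mul _) measurableSet_Ioo hle
      _ = M ^ (p - 2) * b := by rw [hbdef, integral_const_mul]
  -- eLpNorm identities
  have hofp0 : ENNReal.ofReal p ≠ 0 := by
    simp [ENNReal.ofReal_eq_zero, not_le, hp0]
  have hφMem : MemLp φ (ENNReal.ofReal p) μ := by
    refine MemLp.of_bound hφmeas M ?_
    rw [hμdef]
    filter_upwards [ae_restrict_mem measurableSet_Ioo] with t ht
    rw [Real.norm_eq_abs]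
    exact hbound t ⟨ht.1.le, ht.2.le⟩
  have hLHS : eLpNorm φ (ENNReal.ofReal p) μ
      = ENNReal.ofReal ((∫ t in Set.Ioo (0:ℝ) 1, ‖φ t‖ ^ p) ^ p⁻¹) := by
    rw [hφMem.eLpNorm_eq_integral_rpow_norm hofp0 ENNReal.ofReal_ne_top,
      ENNReal.toReal_ofReal hp0.le, hμdef]
  have hg2norm : eLpNorm g 2 μ = ENNReal.ofReal (a ^ ((1:ℝ)/2)) := by
    rw [hgL2.eLpNorm_eq_integral_rpow_norm two_ne_zero ENNReal.ofNat_ne_top]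
    congr 1
    have h2 : (2:ENNReal).toReal = 2 := by simp
    rw [h2]
    have hi : ∫ t, ‖g t‖ ^ (2:ℝ) ∂μ = a := by
      rw [hadef, hμdef]
      refine setIntegral_congr_fun measurableSet_Ioo (fun t _ => ?_)
      rw [Real.norm_eq_abs, show (2:ℝ) = ((2:ℕ):ℝ) by norm_num, Real.rpow_natCast, sq_abs]
    rw [hi, one_div]
  have hφ2norm : eLpNorm φ 2 μ = ENNReal.ofReal (b ^ ((1:ℝ)/2)) := by
    rw [hφL2.eLpNorm_eq_integral_rpow_norm two_ne_zero ENNReal.ofNat_ne_top]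
    congr 1
    have h2 : (2:ENNReal).toReal = 2 := by simp
    rw [h2]
    have hi : ∫ t, ‖φ t‖ ^ (2:ℝ) ∂μ = b := by
      rw [hbdef, hμdef]
      refine setIntegral_congr_fun measurableSet_Ioo (fun t _ => ?_)
      rw [Real.norm_eq_abs, show (2:ℝ) = ((2:ℕ):ℝ) by norm_num, Real.rpow_natCast, sq_abs]
    rw [hi, one_div]
  have hθ0 : (0:ℝ) ≤ 1/2 - 1/p := by
    have h1p : 1/p ≤ 1/2 := one_div_le_one_div_of_le two_pos hp
    linarith
  have hτ0 : (0:ℝ) ≤ 1/2 + 1/p := by positivity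
  rw [hLHS, hg2norm, hφ2norm,
    ENNReal.ofReal_rpow_of_nonneg (Real.rpow_nonneg ha0 _) hθ0,
    ENNReal.ofReal_rpow_of_nonneg (Real.rpow_nonneg hb0 _) hτ0,
    ← ENNReal.ofReal_mul (by positivity), ← ENNReal.ofReal_mul (by positivity)]
  refine ENNReal.ofReal_le_ofReal ?_
  have hIp0 : 0 ≤ ∫ t in Set.Ioo (0:ℝ) 1, ‖φ t‖ ^ p :=
    setIntegral_nonneg measurableSet_Ioo fun t _ => Real.rpow_nonneg (norm_nonneg _) _
  calc (∫ t in Set.Ioo (0:ℝ) 1, ‖φ t‖ ^ p) ^ p⁻¹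
      ≤ (M ^ (p - 2) * b) ^ p⁻¹ := Real.rpow_le_rpow hIp0 hIp (by positivity)
    _ = 2 ^ ((1:ℝ)/2 - 1/p) * (a ^ ((1:ℝ)/2)) ^ ((1:ℝ)/2 - 1/p)
        * (b ^ ((1:ℝ)/2)) ^ ((1:ℝ)/2 + 1/p) := by
      rw [Real.mul_rpow (Real.rpow_nonneg hM0 _) hb0, ← Real.rpow_mul hM0, hMdef,
        Real.mul_rpow (mul_nonneg (Real.rpow_nonneg (by norm_num : (0:ℝ) ≤ 2) _)
          (Real.rpow_nonneg ha0 _)) (Real.rpow_nonneg hb0 _),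
        Real.mul_rpow (Real.rpow_nonneg (by norm_num : (0:ℝ) ≤ 2) _) (Real.rpow_nonneg ha0 _),
        ← Real.rpow_mul (by norm_num : (0:ℝ) ≤ 2), ← Real.rpow_mul ha0, ← Real.rpow_mul hb0,
        ← Real.rpow_mul ha0, ← Real.rpow_mul hb0,
        mul_assoc, ← Real.rpow_add_of_nonneg hb0
          (mul_nonneg (by norm_num : (0:ℝ) ≤ 1/4)
            (mul_nonneg (by linarith : (0:ℝ) ≤ p - 2) (inv_nonneg.2 hp0.le)))
          (inv_nonneg.2 hp0.le), ← mul_assoc]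
      have e0 : (p - 2) * p⁻¹ = 1 - 2 * p⁻¹ := by
        rw [sub_mul, mul_inv_cancel₀ hpne]
      have ea : (1:ℝ)/2 * (p - 2) * p⁻¹ = 1/2 - 1/p := by rw [mul_assoc, e0, one_div]; ring
      have eb : (1:ℝ)/4 * ((p - 2) * p⁻¹) = 1/2 * (1/2 - 1/p) := by rw [e0, one_div]; ring
      have ec : (1:ℝ)/4 * ((p - 2) * p⁻¹) + p⁻¹ = 1/2 * (1/2 + 1/p) := by
        rw [e0, one_div]; ring
      rw [ea, ec, eb]
end
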